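/- arXiv:math/0408141 — 4 statements merged into one kernel-verified Lean document; each statement's English description precedes it below -/
import Mathlib

section
/- Let K be a local field and n a positive integer with char(K) ∤ n. Let P ∈ K[t] be a nonzero polynomial. Then for every t₀ ∈ ℙ¹(K) there is a punctured neighbourhood U_{t₀} of t₀ such that, for all t ∈ U_{t₀} with P(t) ≠ 0, the class of P(t) in K^*/(K^*)^n depends only on the class of t − t₀ in K^*/(K^*)^n (with 1/t in place of t − t₀ when t₀ = ∞). -/
/-- A (nonarchimedean) local field structure on a field `K`: a discrete valuation
`v : K → ℤ ∪ {⊤}` (with `v 0 = ⊤`), normalized so that `v (K^*) = ℤ`, with respect to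
which `K` is complete, and whose residue field is finite. -/
structure IsLocalField {K : Type*} [Field K] (v : K → WithTop ℤ) : Prop where
  map_zero : v 0 = ⊤
  ne_top : ∀ x : K, x ≠ 0 → v x ≠ ⊤
  map_mul : ∀ x y : K, v (x * y) = v x + v y
  min_le_add : ∀ x y : K, min (v x) (v y) ≤ v (x + y)
  exists_eq : ∀ k : ℤ, ∃ x : K, v x = (k : WithTop ℤ)
  complete : ∀ a : ℕ → K,
      (∀ k : ℤ, ∃ N : ℕ, ∀ m m' : ℕ, N ≤ m → N ≤ m' → (k : WithTop ℤ) ≤ v (a m - a m')) →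
      ∃ L : K, ∀ k : ℤ, ∃ N : ℕ, ∀ m : ℕ, N ≤ m → (k : WithTop ℤ) ≤ v (a m - L)
  finite_residue : ∃ T : Finset K, ∀ x : K, 0 ≤ v x → ∃ t ∈ T, (1 : WithTop ℤ) ≤ v (x - t)

namespace IsLocalField

variable {K : Type*} [Field K] {v : K → WithTop ℤ} (hK : IsLocalField v)
include hK

lemma v_eq_top_iff {x : K} : v x = ⊤ ↔ x = 0 := by
  constructor
  · intro h; by_contra hx; exact hK.ne_top x hx h
  · rintro rfl; exact hK.map_zero

lemma v_one : v 1 = 0 := by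
  have h := hK.map_mul 1 1
  rw [mul_one] at h
  have h1 : v (1 : K) ≠ ⊤ := hK.ne_top 1 one_ne_zero
  lift v (1 : K) to ℤ using h1 with a
  have : a = a + a := by exact_mod_cast h
  have : a = 0 := by omega
  simp [this]

lemma v_neg (x : K) : v (-x) = v x := by
  have hm1 : v (-1 : K) = 0 := by
    have h := hK.map_mul (-1) (-1)
    rw [neg_mul_neg, one_mul, hK.v_one] at h
    have h1 : v (-1 : K) ≠ ⊤ := hK.ne_top (-1) (by norm_num)
    lift v (-1 : K) to ℤ using h1 with a
    have : (0 : ℤ) = a + a := by exact_mod_cast h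
    have : a = 0 := by omega
    simp [this]
  have := hK.map_mul (-1) x
  rw [neg_one_mul, hm1, zero_add] at this
  exact this

lemma v_sub_comm (x y : K) : v (x - y) = v (y - x) := by
  rw [← hK.v_neg (x - y), neg_sub]

lemma min_le_sub (x y : K) : min (v x) (v y) ≤ v (x - y) := by
  have h := hK.min_le_add x (-y)
  rw [hK.v_neg y] at h
  rwa [sub_eq_add_neg]

lemma v_add_ge {x y : K} {c : WithTop ℤ} (hx : c ≤ v x) (hy : c ≤ v y) :
    c ≤ v (x + y) := le_trans (le_min hx hy) (hK.min_le_add x y)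

lemma v_sub_ge {x y : K} {c : WithTop ℤ} (hx : c ≤ v x) (hy : c ≤ v y) :
    c ≤ v (x - y) := by
  rw [sub_eq_add_neg]; exact hK.v_add_ge hx (by rwa [hK.v_neg])

lemma v_mul_ge {x y : K} {c d : WithTop ℤ} (hx : c ≤ v x) (hy : d ≤ v y) :
    c + d ≤ v (x * y) := by
  rw [hK.map_mul]; exact add_le_add hx hy

lemma v_pow_nonneg {x : K} (hx : 0 ≤ v x) (j : ℕ) : 0 ≤ v (x ^ j) := by
  induction j with
  | zero => rw [pow_zero, hK.v_one]
  | succ j ih =>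
      rw [pow_succ, hK.map_mul]
      calc (0 : WithTop ℤ) = 0 + 0 := by simp
      _ ≤ v (x ^ j) + v x := add_le_add ih hx

lemma v_pow_eq_zero {x : K} (hx : v x = 0) (j : ℕ) : v (x ^ j) = 0 := by
  induction j with
  | zero => rw [pow_zero]; exact hK.v_one
  | succ j ih => rw [pow_succ, hK.map_mul, ih, hx, add_zero]

lemma v_nat (m : ℕ) : 0 ≤ v (m : K) := by
  induction m with
  | zero => rw [Nat.cast_zero, hK.map_zero]; exact le_top
  | succ m ih =>
      rw [Nat.cast_succ]
      exact hK.v_add_ge ih (le_of_eq hK.v_one.symm)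

lemma v_sum {ι : Type*} (s : Finset ι) (f : ι → K) (c : WithTop ℤ)
    (h : ∀ i ∈ s, c ≤ v (f i)) : c ≤ v (∑ i ∈ s, f i) := by
  classical
  induction s using Finset.induction with
  | empty => simp [hK.map_zero]
  | insert _ _ hnot ih =>
      rw [Finset.sum_insert hnot]
      exact hK.v_add_ge (h _ (Finset.mem_insert_self _ _))
        (ih fun i hi => h i (Finset.mem_insert_of_mem hi))

lemma v_inv_add (x : K) (hx : x ≠ 0) : v x⁻¹ + v x = 0 := by
  rw [← hK.map_mul, inv_mul_cancel₀ hx, hK.v_one]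

/-- If `v (u - 1) ≥ c > 0` then `v u = 0`. -/
lemma v_close_one {u : K} {c : WithTop ℤ} (hc : 0 < c) (h : c ≤ v (u - 1)) : v u = 0 := by
  have h1 : (0 : WithTop ℤ) ≤ v u := by
    have : (0 : WithTop ℤ) ≤ v (u - 1) := le_trans (le_of_lt hc) h
    have := hK.v_add_ge this (le_of_eq hK.v_one.symm)
    rwa [sub_add_cancel] at this
  have h2 : v u ≤ 0 := by
    by_contra hlt
    push_neg at hlt
    have : (0:WithTop ℤ) < v (u - (u - 1)) :=
      lt_of_lt_of_le (lt_min hlt hc) (le_trans (min_le_min le_rfl h) (hK.min_le_sub u (u-1)))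
    rw [sub_sub_cancel, hK.v_one] at this
    exact lt_irrefl _ this
  exact le_antisymm h2 h1

/-- Binomial expansion with error term of valuation `≥ 0`. -/
lemma binom_aux (N : ℕ) (b y : K) :
    ∃ G : K, (b + y) ^ (N + 1) = b ^ (N + 1) + ((N : K) + 1) * b ^ N * y + y ^ 2 * G ∧
      (0 ≤ v b → 0 ≤ v y → 0 ≤ v G) := by
  induction N with
  | zero =>
      refine ⟨0, by push_cast; ring, fun _ _ => ?_⟩
      rw [hK.map_zero]; exact le_top
  | succ N ih =>
      obtain ⟨G, hGeq, hGv⟩ := ih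
      refine ⟨b * G + ((N : K) + 1) * b ^ N + y * G, ?_, fun hb hy => ?_⟩
      · have : (b + y) ^ (N + 1 + 1) = (b + y) ^ (N + 1) * (b + y) := by ring
        rw [this, hGeq]; push_cast; ring
      · have hG := hGv hb hy
        refine hK.v_add_ge (hK.v_add_ge ?_ ?_) ?_
        · simpa using hK.v_mul_ge (c := 0) (d := 0) hb hG
        · have h1 : (0 : WithTop ℤ) ≤ v ((N : K) + 1) := by
            have := hK.v_nat (N + 1); push_cast at this ⊢; exact this
          simpa using hK.v_mul_ge (c := 0) (d := 0) h1 (hK.v_pow_nonneg hb N)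
        · simpa using hK.v_mul_ge (c := 0) (d := 0) hy hG

/-- Hensel's lemma for `n`-th powers: elements close enough to `1` are `n`-th powers. -/
lemma exists_pow_root (n : ℕ) (hn : 0 < n) (hnK : (n : K) ≠ 0) {e : ℤ}
    (he : v (n : K) = (e : WithTop ℤ)) (u : K)
    (hu : ((2 * e + 1 : ℤ) : WithTop ℤ) ≤ v (u - 1)) :
    ∃ w : K, w ≠ 0 ∧ w ^ n = u := by
  obtain ⟨N, rfl⟩ : ∃ N, n = N + 1 := ⟨n - 1, (Nat.succ_pred_eq_of_pos hn).symm⟩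
  set n := N + 1 with hnN
  have he0 : 0 ≤ e := by
    have := hK.v_nat n
    rw [he] at this
    exact_mod_cast this
  -- the Newton iteration
  set a : ℕ → K := fun m => Nat.rec (1 : K) (fun _ b => b - (b ^ n - u) / ((n : K) * b ^ N)) m
    with ha
  have ha0 : a 0 = 1 := rfl
  have hastep : ∀ m, a (m + 1) = a m - (a m ^ n - u) / ((n : K) * a m ^ N) := fun m => rfl
  -- main invariant
  have key : ∀ m, ((e + 1 : ℤ) : WithTop ℤ) ≤ v (a m - 1) ∧
      ((2 * e + 1 + m : ℤ) : WithTop ℤ) ≤ v (a m ^ n - u) := by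
    intro m
    induction m with
    | zero =>
        constructor
        · rw [ha0, sub_self, hK.map_zero]; exact le_top
        · rw [ha0, one_pow, hK.v_sub_comm]; simpa using hu
    | succ m ih =>
        obtain ⟨ih1, ih2⟩ := ih
        set b := a m with hb
        have hvb : v b = 0 := hK.v_close_one (c := ((e + 1 : ℤ) : WithTop ℤ))
          (by exact_mod_cast (by omega : (0:ℤ) < e + 1)) ih1
        have hbne : b ≠ 0 := fun h => by
          rw [h, hK.map_zero] at hvb; exact (by simp : (⊤ : WithTop ℤ) ≠ 0) hvb
        have hden : v ((n : K) * b ^ N) = (e : WithTop ℤ) := by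
          rw [hK.map_mul, hK.v_pow_eq_zero hvb, he, add_zero]
        have hdenne : (n : K) * b ^ N ≠ 0 := mul_ne_zero hnK (pow_ne_zero N hbne)
        set d := (b ^ n - u) / ((n : K) * b ^ N) with hd
        have hda : (n : K) * b ^ N * d = b ^ n - u := by
          rw [hd, mul_div_cancel₀ _ hdenne]
        have hvd : ((e + 1 + m : ℤ) : WithTop ℤ) ≤ v d := by
          have hmul : v (b ^ n - u) = v d + (e : WithTop ℤ) := by
            rw [← hda, hK.map_mul, hden, add_comm]
          rw [hmul] at ih2
          have : ((e + 1 + m : ℤ) : WithTop ℤ) + (e : WithTop ℤ) ≤ v d + (e : WithTop ℤ) := by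
            refine le_trans ?_ ih2
            rw [← WithTop.coe_add]
            exact_mod_cast (by omega : (e + 1 + m) + e ≤ 2 * e + 1 + (m : ℤ))
          exact (WithTop.add_le_add_iff_right (by exact WithTop.coe_ne_top)).mp this
        have hvd0 : (0 : WithTop ℤ) ≤ v d :=
          le_trans (by exact_mod_cast (by omega : (0:ℤ) ≤ e + 1 + m)) hvd
        have haS : a (m + 1) = b + (-d) := by rw [hastep m, ← hb, ← hd]; ring
        constructor
        · rw [haS]
          have : b + -d - 1 = (b - 1) - d := by ring
          rw [this]
          refine hK.v_sub_ge ih1 (le_trans ?_ hvd)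
          exact_mod_cast (by omega : (e + 1 : ℤ) ≤ e + 1 + m)
        · obtain ⟨G, hGeq, hGv⟩ := hK.binom_aux N b (-d)
          have hvG : 0 ≤ v G := hGv (le_of_eq hvb.symm) (by rwa [hK.v_neg])
          have hkey : a (m + 1) ^ n - u = d ^ 2 * G := by
            rw [haS, hnN, hGeq]
            have hcast : ((N : K) + 1) = ((n : K)) := by rw [hnN]; push_cast; ring
            rw [hcast]
            linear_combination -hda
          rw [hkey, pow_two]
          have : ((e + 1 + m : ℤ) : WithTop ℤ) + ((e + 1 + m : ℤ) : WithTop ℤ) + 0 ≤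
              v (d * d * G) := hK.v_mul_ge (hK.v_mul_ge hvd hvd) hvG
          refine le_trans ?_ this
          rw [add_zero, ← WithTop.coe_add]
          exact_mod_cast (by push_cast; omega : (2 * e + 1 + ((m : ℤ) + 1)) ≤ (e + 1 + m) + (e + 1 + m))
  -- Cauchy property
  have hstepv : ∀ m : ℕ, ((e + 1 + m : ℤ) : WithTop ℤ) ≤ v (a (m + 1) - a m) := by
    intro m
    obtain ⟨ih1, ih2⟩ := key m
    set b := a m with hb
    have hvb : v b = 0 := hK.v_close_one (c := ((e + 1 : ℤ) : WithTop ℤ))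
      (by exact_mod_cast (by omega : (0:ℤ) < e + 1)) ih1
    have hbne : b ≠ 0 := fun h => by
      rw [h, hK.map_zero] at hvb; exact (by simp : (⊤ : WithTop ℤ) ≠ 0) hvb
    have hden : v ((n : K) * b ^ N) = (e : WithTop ℤ) := by
      rw [hK.map_mul, hK.v_pow_eq_zero hvb, he, add_zero]
    have hdenne : (n : K) * b ^ N ≠ 0 := mul_ne_zero hnK (pow_ne_zero N hbne)
    set d := (b ^ n - u) / ((n : K) * b ^ N) with hd
    have hda : (n : K) * b ^ N * d = b ^ n - u := by
      rw [hd, mul_div_cancel₀ _ hdenne]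
    have hvd : ((e + 1 + m : ℤ) : WithTop ℤ) ≤ v d := by
      have hmul : v (b ^ n - u) = v d + (e : WithTop ℤ) := by
        rw [← hda, hK.map_mul, hden, add_comm]
      rw [hmul] at ih2
      have : ((e + 1 + m : ℤ) : WithTop ℤ) + (e : WithTop ℤ) ≤ v d + (e : WithTop ℤ) := by
        refine le_trans ?_ ih2
        rw [← WithTop.coe_add]
        exact_mod_cast (by omega : (e + 1 + m) + e ≤ 2 * e + 1 + (m : ℤ))
      exact (WithTop.add_le_add_iff_right (by exact WithTop.coe_ne_top)).mp this
    have heq : a (m + 1) - a m = -d := by rw [hastep m, ← hb, ← hd]; ring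
    rw [heq, hK.v_neg]
    exact hvd
  have htel : ∀ m p : ℕ, ((e + 1 + m : ℤ) : WithTop ℤ) ≤ v (a (m + p) - a m) := by
    intro m p
    induction p with
    | zero => rw [Nat.add_zero, sub_self, hK.map_zero]; exact le_top
    | succ p ih =>
        have h1 : ((e + 1 + m : ℤ) : WithTop ℤ) ≤ v (a (m + p + 1) - a (m + p)) := by
          refine le_trans ?_ (hstepv (m + p))
          exact_mod_cast (by push_cast; omega : (e + 1 + (m:ℤ)) ≤ e + 1 + ((m:ℤ) + p))
        have : a (m + (p + 1)) - a m = (a (m + p + 1) - a (m + p)) + (a (m + p) - a m) := by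
          rw [show m + (p + 1) = m + p + 1 from rfl]; ring
        rw [this]
        exact hK.v_add_ge h1 ih
  have hcauchy : ∀ k : ℤ, ∃ Nk : ℕ, ∀ m m' : ℕ, Nk ≤ m → Nk ≤ m' →
      (k : WithTop ℤ) ≤ v (a m - a m') := by
    intro k
    refine ⟨(k - e - 1).toNat, fun m m' hm hm' => ?_⟩
    have hbound : ∀ m m' : ℕ, (k - e - 1).toNat ≤ m' → m' ≤ m →
        (k : WithTop ℤ) ≤ v (a m - a m') := by
      intro m m' hm' hle
      obtain ⟨p, rfl⟩ := Nat.exists_eq_add_of_le hle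
      refine le_trans ?_ (htel m' p)
      have : k ≤ e + 1 + (m' : ℤ) := by
        have := Int.self_le_toNat (k - e - 1)
        have h2 : ((k - e - 1).toNat : ℤ) ≤ (m' : ℤ) := by exact_mod_cast hm'
        omega
      exact_mod_cast this
    rcases le_total m' m with h | h
    · exact hbound m m' hm' h
    · rw [hK.v_sub_comm]; exact hbound m' m hm h
  obtain ⟨L, hL⟩ := hK.complete a hcauchy
  -- the limit is the desired root
  have hu0 : v u = 0 := hK.v_close_one (c := ((2 * e + 1 : ℤ) : WithTop ℤ))
    (by exact_mod_cast (by omega : (0:ℤ) < 2 * e + 1)) hu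
  have hune : u ≠ 0 := fun h => by rw [h, hK.map_zero] at hu0; exact (by simp : (⊤ : WithTop ℤ) ≠ 0) hu0
  have hLn : L ^ n = u := by
    have hall : ∀ k : ℤ, (k : WithTop ℤ) ≤ v (L ^ n - u) := by
      intro k
      obtain ⟨Nk, hNk⟩ := hL (max k 0)
      set m := max Nk (max k 0).toNat with hm
      have hmNk : Nk ≤ m := le_max_left _ _
      have hclose : ((max k 0 : ℤ) : WithTop ℤ) ≤ v (a m - L) := hNk m hmNk
      have hvam : v (a m) = 0 := hK.v_close_one (c := ((e + 1 : ℤ) : WithTop ℤ))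
        (by exact_mod_cast (by omega : (0:ℤ) < e + 1)) (key m).1
      have hvL : (0 : WithTop ℤ) ≤ v L := by
        have h1 : (0 : WithTop ℤ) ≤ v (L - a m) := by
          rw [hK.v_sub_comm]
          exact le_trans (by exact_mod_cast le_max_right k 0) hclose
        have := hK.v_add_ge h1 (le_of_eq hvam.symm)
        rwa [sub_add_cancel] at this
      have hgeom : L ^ n - a m ^ n =
          (∑ i ∈ Finset.range n, L ^ i * (a m) ^ (n - 1 - i)) * (L - a m) :=
        (geom_sum₂_mul L (a m) n).symm
      have hvgeom : (k : WithTop ℤ) ≤ v (L ^ n - a m ^ n) := by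
        rw [hgeom]
        have hS : (0 : WithTop ℤ) ≤ v (∑ i ∈ Finset.range n, L ^ i * (a m) ^ (n - 1 - i)) := by
          refine hK.v_sum _ _ _ fun i _ => ?_
          simpa using hK.v_mul_ge (c := 0) (d := 0) (hK.v_pow_nonneg hvL i)
            (hK.v_pow_nonneg (le_of_eq hvam.symm) _)
        have h2 : (k : WithTop ℤ) ≤ v (L - a m) := by
          rw [hK.v_sub_comm]
          exact le_trans (by exact_mod_cast le_max_left k 0) hclose
        have := hK.v_mul_ge hS h2
        rwa [zero_add] at this
      have hvfm : (k : WithTop ℤ) ≤ v (a m ^ n - u) := by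
        refine le_trans ?_ (key m).2
        have h1 : ((max k 0).toNat : ℤ) ≤ (m : ℤ) := by
          exact_mod_cast le_max_right Nk (max k 0).toNat
        have h2 := Int.self_le_toNat (max k 0)
        have : k ≤ 2 * e + 1 + (m : ℤ) := by
          have := le_max_left k 0
          omega
        exact_mod_cast this
      have : L ^ n - u = (L ^ n - a m ^ n) + (a m ^ n - u) := by ring
      rw [this]
      exact hK.v_add_ge hvgeom hvfm
    have htop : v (L ^ n - u) = ⊤ := by
      by_contra h
      obtain ⟨z, hz⟩ := WithTop.ne_top_iff_exists.mp h
      have := hall (z + 1)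
      rw [← hz] at this
      exact absurd (WithTop.coe_le_coe.mp this) (by omega)
    exact sub_eq_zero.mp (hK.v_eq_top_iff.mp htop)
  exact ⟨L, fun h => hune (by rw [← hLn, h, zero_pow hn.ne']; ), hLn⟩

lemma v_inv {x : K} (hx : x ≠ 0) {z : ℤ} (hz : v x = (z : WithTop ℤ)) :
    v x⁻¹ = ((-z : ℤ) : WithTop ℤ) := by
  have h := hK.v_inv_add x hx
  have hne : v x⁻¹ ≠ ⊤ := hK.ne_top _ (inv_ne_zero hx)
  lift v x⁻¹ to ℤ using hne with z'
  rw [hz, ← WithTop.coe_add] at h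
  have : z' + z = 0 := by exact_mod_cast h
  exact_mod_cast congrArg (fun t : ℤ => ((t : WithTop ℤ))) (by omega : z' = -z)

/-- A uniform lower bound for valuations of values of a polynomial on the unit ball. -/
lemma eval_lb (T : Polynomial K) : ∃ C : ℤ, ∀ x : K, 0 ≤ v x →
    ((C : ℤ) : WithTop ℤ) ≤ v (T.eval x) := by
  have hcoeff : ∀ s : Finset ℕ, ∃ C : ℤ, ∀ i ∈ s, ((C : ℤ) : WithTop ℤ) ≤ v (T.coeff i) := by
    intro s
    classical
    induction s using Finset.induction with
    | empty => exact ⟨0, fun i hi => absurd hi (Finset.notMem_empty i)⟩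
    | @insert a s hnot ih =>
        obtain ⟨C, hC⟩ := ih
        rcases h : v (T.coeff a) with _ | z
        · exact ⟨C, fun i hi => by
            rcases Finset.mem_insert.mp hi with rfl | hi
            · rw [h]; exact le_top
            · exact hC i hi⟩
        · refine ⟨min C z, fun i hi => ?_⟩
          rcases Finset.mem_insert.mp hi with rfl | hi
          · rw [h]; exact WithTop.coe_le_coe.mpr (min_le_right C z)
          · exact le_trans (by exact_mod_cast min_le_left C z) (hC i hi)
  obtain ⟨C, hC⟩ := hcoeff (Finset.range (T.natDegree + 1))
  refine ⟨C, fun x hx => ?_⟩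
  rw [Polynomial.eval_eq_sum_range]
  refine hK.v_sum _ _ _ fun i hi => ?_
  have := hK.v_mul_ge (hC i hi) (hK.v_pow_nonneg hx i)
  rwa [add_zero] at this

/-- Core lemma: values of `c + x·T(x)` at two points deep enough in the unit ball
differ by an `n`-th power. -/
lemma core (n : ℕ) (hn : 0 < n) (hnK : (n : K) ≠ 0) {e : ℤ}
    (he : v (n : K) = (e : WithTop ℤ)) {c : K} (hc : c ≠ 0) (T : Polynomial K) :
    ∃ k : ℤ, ∀ x₁ x₂ : K, (k : WithTop ℤ) ≤ v x₁ → (k : WithTop ℤ) ≤ v x₂ →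
      ∃ w : K, w ≠ 0 ∧ c + x₁ * T.eval x₁ = w ^ n * (c + x₂ * T.eval x₂) := by
  obtain ⟨C, hC⟩ := hK.eval_lb T
  have hcne : v c ≠ ⊤ := hK.ne_top c hc
  obtain ⟨ec, hec⟩ := WithTop.ne_top_iff_exists.mp hcne
  refine ⟨max 0 (2 * e + 1 + ec - C), fun x₁ x₂ hx₁ hx₂ => ?_⟩
  -- each value is close to c
  have hmain : ∀ x : K, ((max 0 (2 * e + 1 + ec - C) : ℤ) : WithTop ℤ) ≤ v x →
      ((2 * e + 1 : ℤ) : WithTop ℤ) ≤ v ((c + x * T.eval x) / c - 1) := by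
    intro x hx
    have hx0 : (0 : WithTop ℤ) ≤ v x :=
      le_trans (by exact_mod_cast le_max_left 0 (2 * e + 1 + ec - C)) hx
    have heq : (c + x * T.eval x) / c - 1 = x * T.eval x * c⁻¹ := by
      field_simp
      ring
    rw [heq]
    have hvinv : v c⁻¹ = ((-ec : ℤ) : WithTop ℤ) := hK.v_inv hc hec.symm
    have h1 : ((max 0 (2 * e + 1 + ec - C) : ℤ) : WithTop ℤ) + (C : WithTop ℤ) +
        ((-ec : ℤ) : WithTop ℤ) ≤ v (x * T.eval x * c⁻¹) :=
      hK.v_mul_ge (hK.v_mul_ge hx (hC x hx0)) (le_of_eq hvinv.symm)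
    refine le_trans ?_ h1
    rw [← WithTop.coe_add, ← WithTop.coe_add, WithTop.coe_le_coe]
    have := le_max_right 0 (2 * e + 1 + ec - C)
    omega
  have h1 := hmain x₁ hx₁
  have h2 := hmain x₂ hx₂
  set u₁ := (c + x₁ * T.eval x₁) / c with hu₁
  set u₂ := (c + x₂ * T.eval x₂) / c with hu₂
  have hpos : (0 : WithTop ℤ) < ((2 * e + 1 : ℤ) : WithTop ℤ) := by
    have he0 : 0 ≤ e := by
      have := hK.v_nat n; rw [he] at this; exact_mod_cast this
    exact_mod_cast (by omega : (0:ℤ) < 2 * e + 1)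
  have hvu₂ : v u₂ = 0 := hK.v_close_one hpos h2
  have hu₂ne : u₂ ≠ 0 := fun h => by
    rw [h, hK.map_zero] at hvu₂; exact (by simp : (⊤ : WithTop ℤ) ≠ 0) hvu₂
  have hratio : ((2 * e + 1 : ℤ) : WithTop ℤ) ≤ v (u₁ / u₂ - 1) := by
    have heq : u₁ / u₂ - 1 = (u₁ - u₂) * u₂⁻¹ := by field_simp
    rw [heq]
    have hd : ((2 * e + 1 : ℤ) : WithTop ℤ) ≤ v (u₁ - u₂) := by
      have : u₁ - u₂ = (u₁ - 1) - (u₂ - 1) := by ring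
      rw [this]; exact hK.v_sub_ge h1 h2
    have hvinv2 : v u₂⁻¹ = ((-(0:ℤ) : ℤ) : WithTop ℤ) := hK.v_inv hu₂ne (by rw [hvu₂]; rfl)
    have := hK.v_mul_ge hd (le_of_eq hvinv2.symm)
    simpa using this
  obtain ⟨w, hw0, hwn⟩ := hK.exists_pow_root n hn hnK he (u₁ / u₂) hratio
  refine ⟨w, hw0, ?_⟩
  have : u₁ = w ^ n * u₂ := by
    rw [hwn]; field_simp
  rw [hu₁, hu₂] at this
  field_simp at this
  exact this

end IsLocalField

/-- Let `K` be a local field and `n` a positive integer with `char K ∤ n`.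
Let `P ∈ K[t]` be a nonzero polynomial. Then for every `t₀ ∈ ℙ¹(K)` there is a punctured
neighbourhood `U_{t₀}` of `t₀` such that, for all `t ∈ U_{t₀}` with `P(t) ≠ 0`, the class
of `P(t)` in `K^*/(K^*)^n` depends only on the class of `t − t₀` in `K^*/(K^*)^n`
(with `1/t` in place of `t − t₀` when `t₀ = ∞`). -/
theorem stmt3 {K : Type*} [Field K] (v : K → WithTop ℤ) (hK : IsLocalField v)
    (n : ℕ) (hn : 0 < n) (hchar : ringChar K = 0 ∨ ¬ (ringChar K ∣ n))
    (P : Polynomial K) (hP : P ≠ 0) :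
    (∀ t₀ : K, ∃ k : ℤ, ∀ t₁ t₂ : K, t₁ ≠ t₀ → t₂ ≠ t₀ →
        (k : WithTop ℤ) ≤ v (t₁ - t₀) → (k : WithTop ℤ) ≤ v (t₂ - t₀) →
        P.eval t₁ ≠ 0 → P.eval t₂ ≠ 0 →
        (∃ s : K, s ≠ 0 ∧ t₁ - t₀ = s ^ n * (t₂ - t₀)) →
        ∃ s : K, s ≠ 0 ∧ P.eval t₁ = s ^ n * P.eval t₂)
    ∧ (∃ k : ℤ, ∀ t₁ t₂ : K, v t₁ ≤ (k : WithTop ℤ) → v t₂ ≤ (k : WithTop ℤ) →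
        P.eval t₁ ≠ 0 → P.eval t₂ ≠ 0 →
        (∃ s : K, s ≠ 0 ∧ t₁⁻¹ = s ^ n * t₂⁻¹) →
        ∃ s : K, s ≠ 0 ∧ P.eval t₁ = s ^ n * P.eval t₂) := by
  classical
  have hnK : (n : K) ≠ 0 := by
    intro h
    have hdvd : ringChar K ∣ n := (ringChar.spec K n).mp h
    rcases hchar with h0 | hnd
    · rw [h0] at hdvd
      exact absurd (zero_dvd_iff.mp hdvd) hn.ne'
    · exact hnd hdvd
  obtain ⟨e, he⟩ := WithTop.ne_top_iff_exists.mp (hK.ne_top _ hnK)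
  replace he : v (n : K) = (e : WithTop ℤ) := he.symm
  constructor
  · -- finite points t₀
    intro t₀
    set Q := P.comp (Polynomial.X + Polynomial.C t₀) with hQ
    have hQP : Q.comp (Polynomial.X - Polynomial.C t₀) = P := by
      rw [hQ, Polynomial.comp_assoc]
      simp
    have hQ0 : Q ≠ 0 := fun h => hP (by rw [← hQP, h, Polynomial.zero_comp])
    set m := Q.natTrailingDegree with hm
    obtain ⟨S, hS⟩ : (Polynomial.X : Polynomial K) ^ m ∣ Q :=
      Polynomial.X_pow_dvd_iff.mpr
        (fun d hd => Polynomial.coeff_eq_zero_of_lt_natTrailingDegree hd)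
    set c := S.coeff 0 with hcdef
    have hc : c ≠ 0 := by
      have h1 : Q.coeff m = c := by
        rw [hS, hcdef]
        simpa using Polynomial.coeff_X_pow_mul S m 0
      intro h
      exact hQ0 (Polynomial.trailingCoeff_eq_zero.mp (by rwa [Polynomial.trailingCoeff, ← hm, h1]))
    obtain ⟨T, hT⟩ : (Polynomial.X : Polynomial K) ∣ (S - Polynomial.C c) :=
      Polynomial.X_dvd_iff.mpr (by simp [hcdef])
    have hSred : S = Polynomial.C c + Polynomial.X * T := by linear_combination hT
    have heval : ∀ t : K, P.eval t = (t - t₀) ^ m * (c + (t - t₀) * T.eval (t - t₀)) := by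
      intro t
      have h1 : P.eval t = Q.eval (t - t₀) := by
        rw [← hQP, Polynomial.eval_comp]
        simp
      rw [h1, hS, hSred]
      simp
    obtain ⟨k, hk⟩ := hK.core n hn hnK he hc T
    refine ⟨k, fun t₁ t₂ h₁ h₂ hv₁ hv₂ _ _ ⟨s, hs0, hs⟩ => ?_⟩
    obtain ⟨w, hw0, hw⟩ := hk (t₁ - t₀) (t₂ - t₀) hv₁ hv₂
    refine ⟨s ^ m * w, mul_ne_zero (pow_ne_zero m hs0) hw0, ?_⟩
    rw [heval t₁, heval t₂, hw, hs, mul_pow]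
    ring
  · -- the point at infinity
    set d := P.natDegree with hd
    set Q := P.reverse with hQ
    set c := Q.coeff 0 with hcdef
    have hc : c ≠ 0 := by
      rw [hcdef, hQ, Polynomial.coeff_zero_reverse]
      exact Polynomial.leadingCoeff_ne_zero.mpr hP
    obtain ⟨T, hT⟩ : (Polynomial.X : Polynomial K) ∣ (Q - Polynomial.C c) :=
      Polynomial.X_dvd_iff.mpr (by simp [hcdef])
    have hQred : Q = Polynomial.C c + Polynomial.X * T := by linear_combination hT
    have heval : ∀ t : K, t ≠ 0 → P.eval t = t ^ d * (c + t⁻¹ * T.eval t⁻¹) := by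
      intro t ht
      letI := invertibleOfNonzero ht
      have h := Polynomial.eval₂_reverse_mul_pow (RingHom.id K) t P
      rw [invOf_eq_inv] at h
      have h2 : Polynomial.eval₂ (RingHom.id K) t P = P.eval t := rfl
      have h3 : Polynomial.eval₂ (RingHom.id K) t⁻¹ P.reverse = Q.eval t⁻¹ := rfl
      rw [h2, h3] at h
      rw [← h, hQred]
      simp
      ring
    obtain ⟨k₀, hk⟩ := hK.core n hn hnK he hc T
    refine ⟨-k₀, fun t₁ t₂ hv₁ hv₂ _ _ ⟨s, hs0, hs⟩ => ?_⟩
    have hne : ∀ t : K, v t ≤ ((-k₀ : ℤ) : WithTop ℤ) → t ≠ 0 ∧ (k₀ : WithTop ℤ) ≤ v t⁻¹ := by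
      intro t ht
      have htop : v t ≠ ⊤ := fun h => by
        rw [h] at ht
        exact absurd ht (by simp)
      obtain ⟨z, hz⟩ := WithTop.ne_top_iff_exists.mp htop
      have ht0 : t ≠ 0 := fun h => htop (by rw [h, hK.map_zero])
      refine ⟨ht0, ?_⟩
      rw [hK.v_inv ht0 hz.symm]
      rw [← hz] at ht
      have hz' : z ≤ -k₀ := by exact_mod_cast ht
      exact_mod_cast (by omega : k₀ ≤ -z)
    obtain ⟨ht₁0, hx₁⟩ := hne t₁ hv₁
    obtain ⟨ht₂0, hx₂⟩ := hne t₂ hv₂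
    obtain ⟨w, hw0, hw⟩ := hk t₁⁻¹ t₂⁻¹ hx₁ hx₂
    refine ⟨(s⁻¹) ^ d * w, mul_ne_zero (pow_ne_zero _ (inv_ne_zero hs0)) hw0, ?_⟩
    have ht1 : t₁ = (s⁻¹) ^ n * t₂ := by
      rw [← inv_inv t₁, hs, mul_inv, inv_inv, ← inv_pow]
    rw [heval t₁ ht₁0, heval t₂ ht₂0, hw, ht1, mul_pow]
    ring
end

section
/- Let K be a local field and n a positive integer with char(K) ∤ n. Let g(t) = ∏_{j=1}^{r} g_j(P_j(t), Q_j(t)), where each g_j is a function K^*/(K^*)^n × K^*/(K^*)^n → ℂ and P_j, Q_j ∈ K[t] are nonzero polynomials (so g is defined at the t for which all P_j(t) and Q_j(t) are nonzero, i.e., outside a finite set). Then for every t₀ ∈ ℙ¹(K) there is a punctured neighbourhood U_{t₀} of t₀ such that, for t ∈ U_{t₀}, the value of g(t) depends only on (t − t₀) mod (K^*)^n (with 1/t in place of t − t₀ when t₀ = ∞). -/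
/-- cancellation: `k ≤ a + b ↔ k - b ≤ a` for `a : WithTop ℤ`, `b k : ℤ`. -/
theorem wt_le_add_iff (a : WithTop ℤ) (b k : ℤ) :
    (k : WithTop ℤ) ≤ a + (b : WithTop ℤ) ↔ ((k - b : ℤ) : WithTop ℤ) ≤ a := by
  induction a
  · simp
  · rename_i a
    rw [← WithTop.coe_add, WithTop.coe_le_coe, WithTop.coe_le_coe]
    omega

theorem exists_X_pow_factor {K : Type*} [Field K] :
    ∀ (d : ℕ) (R : Polynomial K), R.natDegree ≤ d → R ≠ 0 →
      ∃ (e : ℕ) (S : Polynomial K), S.coeff 0 ≠ 0 ∧ R = Polynomial.X ^ e * S := by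
  intro d
  induction d with
  | zero =>
    intro R hd hR
    by_cases h : R.coeff 0 = 0
    · exact absurd (by rw [Polynomial.eq_C_of_natDegree_le_zero hd, h, map_zero]) hR
    · exact ⟨0, R, h, by simp⟩
  | succ d ih =>
    intro R hd hR
    by_cases h : R.coeff 0 = 0
    · obtain ⟨R', hR'⟩ := Polynomial.X_dvd_iff.mpr h
      have hR'0 : R' ≠ 0 := fun hh => hR (by rw [hR', hh, mul_zero])
      have hdeg : R'.natDegree ≤ d := by
        have h1 : R.natDegree = 1 + R'.natDegree := by
          rw [hR', Polynomial.natDegree_mul Polynomial.X_ne_zero hR'0, Polynomial.natDegree_X]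
        omega
      obtain ⟨e, S, hS, hfac⟩ := ih R' hdeg hR'0
      exact ⟨e + 1, S, hS, by rw [hR', hfac, pow_succ]; ring⟩
    · exact ⟨0, R, h, by simp⟩

namespace LFAux

variable {K : Type*} [Field K] {v : K → WithTop ℤ} (hK : IsLocalField v)
include hK

theorem v_one : v 1 = 0 := by
  have h := hK.map_mul 1 1
  rw [mul_one] at h
  have h1 : v 1 ≠ ⊤ := hK.ne_top 1 one_ne_zero
  lift (v 1) to ℤ using h1 with a ha
  rw [← WithTop.coe_add, WithTop.coe_eq_coe] at h
  have : a = 0 := by omega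
  simp [this]

theorem v_neg (x : K) : v (-x) = v x := by
  have hm1 : v (-1 : K) = 0 := by
    have h := hK.map_mul (-1) (-1)
    rw [neg_mul_neg, one_mul, v_one hK] at h
    have h1 : v (-1 : K) ≠ ⊤ := hK.ne_top _ (by norm_num)
    lift (v (-1 : K)) to ℤ using h1 with a ha
    rw [← WithTop.coe_add, eq_comm, WithTop.coe_eq_zero] at h
    · have : a = 0 := by omega
      simp [this]
  have := hK.map_mul (-1) x
  rw [neg_one_mul, hm1, zero_add] at this
  exact this

theorem v_sub_comm (x y : K) : v (x - y) = v (y - x) := by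
  rw [← v_neg hK (y - x), neg_sub]

theorem min_le_sub (x y : K) : min (v x) (v y) ≤ v (x - y) := by
  have := hK.min_le_add x (-y)
  rw [v_neg hK y] at this
  rwa [sub_eq_add_neg]

theorem v_add_eq_left {x y : K} (h : v x < v y) : v (x + y) = v x := by
  have h1 := hK.min_le_add x y
  rw [min_eq_left h.le] at h1
  refine le_antisymm ?_ h1
  have h2 : x = (x + y) - y := by ring
  have h3 := min_le_sub hK (x + y) y
  rw [← h2] at h3
  rcases le_or_gt (v (x+y)) (v y) with h4 | h4
  · rw [min_eq_left h4] at h3; exact h3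
  · exfalso
    rw [min_eq_right h4.le] at h3
    exact absurd (h3.trans_lt h) (lt_irrefl _)
theorem eq_zero_of_forall_le {x : K} (h : ∀ k : ℤ, (k : WithTop ℤ) ≤ v x) : x = 0 := by
  by_contra hx
  have := hK.ne_top x hx
  lift (v x) to ℤ using this with a ha
  have := h (a + 1)
  rw [WithTop.coe_le_coe] at this
  omega

theorem v_nonneg_natCast (m : ℕ) : 0 ≤ v (m : K) := by
  induction m with
  | zero => simp [hK.map_zero]
  | succ m ih =>
    push_cast
    calc (0 : WithTop ℤ) ≤ min (v (m : K)) (v (1 : K)) := by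
          rw [v_one hK]; simp [ih]
      _ ≤ v ((m : K) + 1) := hK.min_le_add _ _

theorem v_pow_nonneg {x : K} (h : 0 ≤ v x) (m : ℕ) : 0 ≤ v (x ^ m) := by
  induction m with
  | zero => simp [pow_zero, v_one hK]
  | succ m ih =>
    rw [pow_succ, hK.map_mul]
    exact add_nonneg ih h

theorem v_pow_eq_zero {x : K} (h : v x = 0) (m : ℕ) : v (x ^ m) = 0 := by
  induction m with
  | zero => simp [pow_zero, v_one hK]
  | succ m ih => rw [pow_succ, hK.map_mul, ih, h, add_zero]

theorem v_sum {ι : Type*} (s : Finset ι) (f : ι → K) (C : WithTop ℤ)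
    (h : ∀ i ∈ s, C ≤ v (f i)) : C ≤ v (∑ i ∈ s, f i) := by
  classical
  induction s using Finset.induction_on with
  | empty => simp [hK.map_zero]
  | @insert a s' hni ih =>
    rw [Finset.sum_insert hni]
    calc C ≤ min (v (f a)) (v (∑ i ∈ s', f i)) := by
          refine le_min (h a (by simp)) (ih fun i hi => h i (by simp [hi]))
      _ ≤ _ := hK.min_le_add _ _

theorem v_inv {x : K} (hx : x ≠ 0) : v x + v x⁻¹ = 0 := by
  have := hK.map_mul x x⁻¹
  rw [mul_inv_cancel₀ hx, v_one hK] at this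
  exact this.symm

/-- lower bound for polynomial evaluations on the unit ball -/
theorem v_eval_lb (T : Polynomial K) : ∃ C : ℤ, ∀ x : K, 0 ≤ v x →
    (C : WithTop ℤ) ≤ v (T.eval x) := by
  classical
  obtain ⟨C, hC⟩ := Finite.exists_le (fun i : Fin (T.natDegree + 1) =>
    -((v (T.coeff i)).untopD 0))
  refine ⟨min (-C) 0, fun x hx => ?_⟩
  rw [Polynomial.eval_eq_sum_range]
  refine v_sum hK _ _ _ fun i hi => ?_
  rw [hK.map_mul]
  rcases eq_or_ne (v (T.coeff i)) ⊤ with h | h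
  · simp [h]
  · lift (v (T.coeff i)) to ℤ using h with a ha
    have h1 : (min (-C) 0 : WithTop ℤ) ≤ (a : WithTop ℤ) := by
      have := hC ⟨i, Finset.mem_range.mp hi⟩
      simp only [← ha, WithTop.untopD_coe] at this
      have h2 : min (-C) 0 ≤ a := by omega
      exact_mod_cast h2
    calc (min (-C) 0 : WithTop ℤ) ≤ (a : WithTop ℤ) + 0 := by simpa using h1
      _ ≤ (a : WithTop ℤ) + v (x ^ i) := by
          exact add_le_add le_rfl (v_pow_nonneg hK hx i)

theorem hensel {n : ℕ} (hn : 0 < n) (hnK : (n : K) ≠ 0) :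
    ∃ c : ℤ, 1 ≤ c ∧ ∀ u : K, (c : WithTop ℤ) ≤ v (u - 1) →
      ∃ y : K, y ≠ 0 ∧ u = y ^ n := by
  have hνt : v (n : K) ≠ ⊤ := hK.ne_top _ hnK
  lift (v ((n : K))) to ℤ using hνt with ν hν
  have hν0 : (0 : ℤ) ≤ ν := by
    have := v_nonneg_natCast hK n
    rw [← hν] at this
    exact_mod_cast this
  set c : ℤ := 2 * ν + 1 with hc
  refine ⟨c, by omega, fun u hu => ?_⟩
  -- the Newton step
  have step : ∀ (m : ℕ) (y : K), (((ν + 1 : ℤ)) : WithTop ℤ) ≤ v (y - 1) →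
      (((c + m : ℤ)) : WithTop ℤ) ≤ v (y ^ n - u) →
      (((ν + 1 + m : ℤ)) : WithTop ℤ) ≤ v ((u - y ^ n) / ((n : K) * y ^ (n - 1))) ∧
      (((ν + 1 : ℤ)) : WithTop ℤ) ≤ v ((y + (u - y ^ n) / ((n : K) * y ^ (n - 1))) - 1) ∧
      (((c + (m + 1) : ℤ)) : WithTop ℤ) ≤
        v ((y + (u - y ^ n) / ((n : K) * y ^ (n - 1))) ^ n - u) := by
    intro m y hy1 hyu
    set δ : K := (u - y ^ n) / ((n : K) * y ^ (n - 1)) with hδ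
    have vy : v y = 0 := by
      have h1 : v (1 : K) < v (y - 1) := by
        rw [v_one hK]
        refine lt_of_lt_of_le ?_ hy1
        exact_mod_cast (by omega : (0:ℤ) < ν + 1)
      have := v_add_eq_left hK h1
      rw [add_sub_cancel] at this
      rw [this, v_one hK]
    have hy0 : y ≠ 0 := fun h => by simp [h, hK.map_zero] at vy
    have hden : ((n : K) * y ^ (n - 1)) ≠ 0 := by
      exact mul_ne_zero hnK (pow_ne_zero _ hy0)
    have vden : v ((n : K) * y ^ (n - 1)) = (ν : WithTop ℤ) := by
      rw [hK.map_mul, v_pow_eq_zero hK vy, add_zero, hν]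
    have hδmul : δ * ((n : K) * y ^ (n - 1)) = u - y ^ n := div_mul_cancel₀ _ hden
    have vδ : (((ν + 1 + m : ℤ)) : WithTop ℤ) ≤ v δ := by
      have h1 : (((c + m : ℤ)) : WithTop ℤ) ≤ v (δ * ((n : K) * y ^ (n - 1))) := by
        rw [hδmul, v_sub_comm hK]
        exact hyu
      rw [hK.map_mul, vden, wt_le_add_iff] at h1
      have : c + m - ν = ν + 1 + m := by omega
      rwa [this] at h1
    have vδ0 : (0 : WithTop ℤ) ≤ v δ :=
      le_trans (by exact_mod_cast (by omega : (0:ℤ) ≤ ν + 1 + m)) vδ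
    refine ⟨vδ, ?_, ?_⟩
    · have : y + δ - 1 = (y - 1) + δ := by ring
      rw [this]
      refine le_trans (le_min hy1 (le_trans ?_ vδ)) (hK.min_le_add _ _)
      exact_mod_cast (by omega : (ν + 1 : ℤ) ≤ ν + 1 + m)
    · -- binomial expansion
      have hpow : (y + δ) ^ n = ∑ k ∈ Finset.range (n + 1),
          δ ^ k * y ^ (n - k) * (n.choose k : K) := by
        rw [add_comm y δ]
        exact add_pow δ y n
      have hsplit : (y + δ) ^ n = y ^ n + (u - y ^ n) +
          ∑ k ∈ Finset.Ico 2 (n + 1), δ ^ k * y ^ (n - k) * (n.choose k : K) := by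
        rw [hpow, Finset.range_eq_Ico,
          Finset.sum_eq_sum_Ico_succ_bot (by omega : 0 < n + 1),
          Finset.sum_eq_sum_Ico_succ_bot (by omega : 1 < n + 1)]
        have h0 : δ ^ 0 * y ^ (n - 0) * (n.choose 0 : K) = y ^ n := by simp
        have h1 : δ ^ 1 * y ^ (n - 1) * (n.choose 1 : K) = u - y ^ n := by
          rw [Nat.choose_one_right, pow_one, ← hδmul]
          ring
        rw [h0, h1, add_assoc]
      have hE : (y + δ) ^ n - u =
          ∑ k ∈ Finset.Ico 2 (n + 1), δ ^ k * y ^ (n - k) * (n.choose k : K) := by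
        rw [hsplit]; ring
      rw [hE]
      refine v_sum hK _ _ _ fun k hk => ?_
      rw [Finset.mem_Ico] at hk
      have hk2 : k = 2 + (k - 2) := by omega
      have vterm : v (δ ^ k * y ^ (n - k) * (n.choose k : K)) =
          v δ + v δ + (v (δ ^ (k - 2)) + v (y ^ (n - k)) + v ((n.choose k : K))) := by
        rw [hk2, pow_add, pow_two]
        rw [hK.map_mul, hK.map_mul, hK.map_mul, hK.map_mul]
        simp only [Nat.add_sub_cancel_left]
        abel
      rw [vterm]
      have hrest : (0 : WithTop ℤ) ≤ v (δ ^ (k - 2)) + v (y ^ (n - k)) + v ((n.choose k : K)) := by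
        refine add_nonneg (add_nonneg (v_pow_nonneg hK vδ0 _) ?_) (v_nonneg_natCast hK _)
        rw [v_pow_eq_zero hK vy]
      calc (((c + (m + 1) : ℤ)) : WithTop ℤ)
          ≤ (((ν + 1 + m : ℤ)) : WithTop ℤ) + (((ν + 1 + m : ℤ)) : WithTop ℤ) := by
            rw [← WithTop.coe_add, WithTop.coe_le_coe]; omega
        _ ≤ v δ + v δ := add_le_add vδ vδ
        _ ≤ v δ + v δ + (v (δ ^ (k - 2)) + v (y ^ (n - k)) + v ((n.choose k : K))) := by
            exact le_add_of_nonneg_right hrest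
  -- the Newton sequence
  set y : ℕ → K := fun m => Nat.rec (1 : K)
    (fun _ ym => ym + (u - ym ^ n) / ((n : K) * ym ^ (n - 1))) m with hy
  have hy0 : y 0 = 1 := rfl
  have hys : ∀ m, y (m + 1) = y m + (u - y m ^ n) / ((n : K) * (y m) ^ (n - 1)) := fun m => rfl
  have inv : ∀ m : ℕ, (((ν + 1 : ℤ)) : WithTop ℤ) ≤ v (y m - 1) ∧
      (((c + m : ℤ)) : WithTop ℤ) ≤ v ((y m) ^ n - u) ∧
      (((ν + 1 + m : ℤ)) : WithTop ℤ) ≤ v (y (m + 1) - y m) := by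
    intro m
    induction m with
    | zero =>
      have h1 : (((ν + 1 : ℤ)) : WithTop ℤ) ≤ v (y 0 - 1) := by
        rw [hy0, sub_self, hK.map_zero]; exact le_top
      have h2 : (((c + (0:ℕ) : ℤ)) : WithTop ℤ) ≤ v ((y 0) ^ n - u) := by
        rw [hy0, one_pow, v_sub_comm hK]
        simpa using hu
      obtain ⟨s1, _, _⟩ := step 0 (y 0) h1 h2
      refine ⟨h1, h2, ?_⟩
      rw [hys 0]
      simpa using s1
    | succ m ih =>
      obtain ⟨ih1, ih2, ih3⟩ := ih
      obtain ⟨s1, s2, s3⟩ := step m (y m) ih1 ih2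
      rw [← hys m] at s2 s3
      obtain ⟨t1, _, _⟩ := step (m + 1) (y (m + 1)) s2 (by exact_mod_cast s3)
      refine ⟨s2, by exact_mod_cast s3, ?_⟩
      rw [hys (m + 1)]
      simpa using t1
  have vym : ∀ m, v (y m) = 0 := by
    intro m
    have h1 : v (1 : K) < v (y m - 1) := by
      rw [v_one hK]
      refine lt_of_lt_of_le ?_ (inv m).1
      exact_mod_cast (by omega : (0:ℤ) < ν + 1)
    have := v_add_eq_left hK h1
    rw [add_sub_cancel] at this
    rw [this, v_one hK]
  -- Cauchy
  have cauchy : ∀ m m' : ℕ, m ≤ m' → (((ν + 1 + m : ℤ)) : WithTop ℤ) ≤ v (y m' - y m) := by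
    intro m m' hmm
    induction m' , hmm using Nat.le_induction with
    | base => rw [sub_self, hK.map_zero]; exact le_top
    | succ m' hmm ih =>
      have : y (m' + 1) - y m = (y (m' + 1) - y m') + (y m' - y m) := by ring
      rw [this]
      refine le_trans (le_min ?_ ih) (hK.min_le_add _ _)
      refine le_trans ?_ (inv m').2.2
      rw [WithTop.coe_le_coe]; omega
  obtain ⟨L, hL⟩ := hK.complete y (by
    intro k
    refine ⟨(k - ν - 1).toNat, fun m m' hm hm' => ?_⟩
    have key : ∀ a b : ℕ, (k - ν - 1).toNat ≤ a → a ≤ b →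
        (k : WithTop ℤ) ≤ v (y b - y a) := by
      intro a b ha hab
      refine le_trans ?_ (cauchy a b hab)
      rw [WithTop.coe_le_coe]
      omega
    rcases le_total m m' with h | h
    · rw [v_sub_comm hK]; exact key m m' hm h
    · exact key m' m hm' h)
  have vL1 : (((ν + 1 : ℤ)) : WithTop ℤ) ≤ v (L - 1) := by
    obtain ⟨N, hN⟩ := hL (ν + 1)
    have h1 : L - 1 = (L - y N) + (y N - 1) := by ring
    rw [h1]
    refine le_trans (le_min ?_ (inv N).1) (hK.min_le_add _ _)
    rw [v_sub_comm hK]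
    exact hN N le_rfl
  have vL : v L = 0 := by
    have h1 : v (1 : K) < v (L - 1) := by
      rw [v_one hK]
      refine lt_of_lt_of_le ?_ vL1
      exact_mod_cast (by omega : (0:ℤ) < ν + 1)
    have := v_add_eq_left hK h1
    rw [add_sub_cancel] at this
    rw [this, v_one hK]
  have hL0 : L ≠ 0 := fun h => by simp [h, hK.map_zero] at vL
  refine ⟨L, hL0, ?_⟩
  have : u - L ^ n = 0 := by
    refine eq_zero_of_forall_le hK fun k => ?_
    obtain ⟨N, hN⟩ := hL k
    set m : ℕ := max N (k - c).toNat with hm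
    have h1 : (k : WithTop ℤ) ≤ v (L ^ n - (y m) ^ n) := by
      rw [← geom_sum₂_mul L (y m) n, hK.map_mul]
      have hgeo : (0 : WithTop ℤ) ≤ v (∑ i ∈ Finset.range n, L ^ i * (y m) ^ (n - 1 - i)) := by
        refine v_sum hK _ _ _ fun i _ => ?_
        rw [hK.map_mul, v_pow_eq_zero hK vL, v_pow_eq_zero hK (vym m), add_zero]
      calc (k : WithTop ℤ) ≤ 0 + v (L - y m) := by
            rw [zero_add, v_sub_comm hK]
            exact hN m (le_max_left _ _)
        _ ≤ _ := add_le_add hgeo le_rfl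
    have h2 : (k : WithTop ℤ) ≤ v ((y m) ^ n - u) := by
      refine le_trans ?_ (inv m).2.1
      rw [WithTop.coe_le_coe]
      have : (k - c).toNat ≤ m := le_max_right _ _
      omega
    have h3 : u - L ^ n = -((L ^ n - y m ^ n) + (y m ^ n - u)) := by ring
    rw [h3, v_neg hK]
    exact le_trans (le_min h1 h2) (hK.min_le_add _ _)
  have := sub_eq_zero.mp this
  exact this

theorem unit_approx {n : ℕ} (hn : 0 < n) (hnK : (n : K) ≠ 0) (S : Polynomial K)
    (h0 : S.coeff 0 ≠ 0) :
    ∃ k : ℤ, ∀ x : K, (k : WithTop ℤ) ≤ v x →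
      ∃ y : K, y ≠ 0 ∧ S.eval x = S.coeff 0 * y ^ n := by
  obtain ⟨c, hc1, hc⟩ := hensel hK hn hnK
  obtain ⟨C, hC⟩ := v_eval_lb hK S.divX
  lift (v (S.coeff 0)) to ℤ using hK.ne_top _ h0 with a ha
  refine ⟨max 0 (c + a - C), fun x hx => ?_⟩
  have hx0 : (0 : WithTop ℤ) ≤ v x :=
    le_trans (by exact_mod_cast le_max_left 0 (c + a - C)) hx
  have heval : S.eval x - S.coeff 0 = x * S.divX.eval x := by
    have h := congrArg (Polynomial.eval x) (Polynomial.X_mul_divX_add S)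
    simp only [Polynomial.eval_add, Polynomial.eval_mul, Polynomial.eval_X,
      Polynomial.eval_C] at h
    linear_combination -h
  have h1 : ((c + a : ℤ) : WithTop ℤ) ≤ v (S.eval x - S.coeff 0) := by
    rw [heval, hK.map_mul]
    calc ((c + a : ℤ) : WithTop ℤ) = ((c + a - C : ℤ) : WithTop ℤ) + (C : WithTop ℤ) := by
          rw [← WithTop.coe_add, WithTop.coe_eq_coe]; ring
      _ ≤ v x + v (S.divX.eval x) := by
          refine add_le_add (le_trans ?_ hx) (hC x hx0)
          exact_mod_cast le_max_right 0 (c + a - C)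
  have hw : ((c : ℤ) : WithTop ℤ) ≤ v (S.eval x / S.coeff 0 - 1) := by
    have heq : (S.eval x / S.coeff 0 - 1) * S.coeff 0 = S.eval x - S.coeff 0 := by
      field_simp
    have h2 := h1
    rw [← heq, hK.map_mul, ← ha, wt_le_add_iff] at h2
    have : c + a - a = c := by ring
    rwa [this] at h2
  obtain ⟨y, hy0, hy⟩ := hc _ hw
  refine ⟨y, hy0, ?_⟩
  rw [← hy]
  field_simp

theorem key1 {n : ℕ} (hn : 0 < n) (hnK : (n : K) ≠ 0) (P : Polynomial K) (hP : P ≠ 0)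
    (t₀ : K) :
    ∃ k : ℤ, ∀ t₁ t₂ s : K, t₁ ≠ t₀ → t₂ ≠ t₀ →
      (k : WithTop ℤ) ≤ v (t₁ - t₀) → (k : WithTop ℤ) ≤ v (t₂ - t₀) →
      s ≠ 0 → t₁ - t₀ = s ^ n * (t₂ - t₀) →
      ∃ s' : K, s' ≠ 0 ∧ P.eval t₁ = s' ^ n * P.eval t₂ := by
  set R : Polynomial K := Polynomial.taylor t₀ P with hR
  have hR0 : R ≠ 0 := fun h => hP (by
    have := Polynomial.taylor_injective t₀ (a₁ := P) (a₂ := 0) (by simpa [hR] using h)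
    exact this)
  obtain ⟨e, S, hS0, hfac⟩ := exists_X_pow_factor R.natDegree R le_rfl hR0
  obtain ⟨k, hk⟩ := unit_approx hK hn hnK S hS0
  refine ⟨k, fun t₁ t₂ s h₁ h₂ hv₁ hv₂ hs hrel => ?_⟩
  have heval : ∀ t : K, P.eval t = (t - t₀) ^ e * S.eval (t - t₀) := by
    intro t
    have h3 : R.eval (t - t₀) = P.eval t := by
      rw [hR, Polynomial.taylor_eval, sub_add_cancel]
    rw [← h3, hfac]
    simp
  obtain ⟨y₁, hy₁0, hy₁⟩ := hk (t₁ - t₀) hv₁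
  obtain ⟨y₂, hy₂0, hy₂⟩ := hk (t₂ - t₀) hv₂
  refine ⟨s ^ e * y₁ * y₂⁻¹,
    mul_ne_zero (mul_ne_zero (pow_ne_zero _ hs) hy₁0) (inv_ne_zero hy₂0), ?_⟩
  rw [heval t₁, heval t₂, hy₁, hy₂, hrel, mul_pow, ← pow_mul, mul_pow, mul_pow, ← pow_mul,
    inv_pow, Nat.mul_comm e n]
  field_simp

theorem key2 {n : ℕ} (hn : 0 < n) (hnK : (n : K) ≠ 0) (P : Polynomial K) (hP : P ≠ 0) :
    ∃ k : ℤ, ∀ t₁ t₂ s : K, v t₁ ≤ (k : WithTop ℤ) → v t₂ ≤ (k : WithTop ℤ) →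
      s ≠ 0 → t₁⁻¹ = s ^ n * t₂⁻¹ →
      ∃ s' : K, s' ≠ 0 ∧ P.eval t₁ = s' ^ n * P.eval t₂ := by
  set R : Polynomial K := P.reverse with hR
  have hR0 : R.coeff 0 ≠ 0 := by
    rw [hR, Polynomial.coeff_zero_reverse]
    exact Polynomial.leadingCoeff_ne_zero.mpr hP
  obtain ⟨k₀, hk⟩ := unit_approx hK hn hnK R hR0
  refine ⟨-k₀, fun t₁ t₂ s hv₁ hv₂ hs hrel => ?_⟩
  have hne : ∀ t : K, v t ≤ ((-k₀ : ℤ) : WithTop ℤ) → t ≠ 0 := by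
    intro t ht h
    rw [h, hK.map_zero, top_le_iff] at ht
    exact WithTop.coe_ne_top ht
  have ht₁ : t₁ ≠ 0 := hne t₁ hv₁
  have ht₂ : t₂ ≠ 0 := hne t₂ hv₂
  have hvinv : ∀ t : K, t ≠ 0 → v t ≤ ((-k₀ : ℤ) : WithTop ℤ) → (k₀ : WithTop ℤ) ≤ v t⁻¹ := by
    intro t ht hvt
    have hsum := v_inv hK ht
    lift (v t) to ℤ using hK.ne_top t ht with b hb
    lift (v t⁻¹) to ℤ using hK.ne_top t⁻¹ (inv_ne_zero ht) with b' hb'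
    rw [← WithTop.coe_add] at hsum
    rw [WithTop.coe_le_coe] at hvt ⊢
    have h1 : b + b' = 0 := by exact_mod_cast hsum
    omega
  have hrev : ∀ t : K, t ≠ 0 → P.eval t = R.eval t⁻¹ * t ^ P.natDegree := by
    intro t ht
    have : Invertible t := invertibleOfNonzero ht
    have h := Polynomial.eval₂_reverse_mul_pow (RingHom.id K) t P
    rw [Polynomial.eval₂_eq_eval_map, Polynomial.eval₂_eq_eval_map, Polynomial.map_id,
      Polynomial.map_id, invOf_eq_inv] at h
    exact h.symm
  obtain ⟨y₁, hy₁0, hy₁⟩ := hk t₁⁻¹ (hvinv t₁ ht₁ hv₁)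
  obtain ⟨y₂, hy₂0, hy₂⟩ := hk t₂⁻¹ (hvinv t₂ ht₂ hv₂)
  refine ⟨(s⁻¹) ^ P.natDegree * y₁ * y₂⁻¹,
    mul_ne_zero (mul_ne_zero (pow_ne_zero _ (inv_ne_zero hs)) hy₁0) (inv_ne_zero hy₂0), ?_⟩
  have ht1eq : t₁ = (s ^ n)⁻¹ * t₂ := by
    have : t₁⁻¹⁻¹ = (s ^ n * t₂⁻¹)⁻¹ := by rw [hrel]
    rwa [inv_inv, mul_inv, inv_inv] at this
  rw [hrev t₁ ht₁, hrev t₂ ht₂, hy₁, hy₂, ht1eq, mul_pow]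
  field_simp
  rw [← mul_pow, div_mul_cancel₀ _ hy₂0]
  ring


end LFAux

/-- Let `K` be a local field and `n` a positive integer with `char K ∤ n`.
Let `g(t) = ∏_{j=1}^r g_j(P_j(t), Q_j(t))`, where each `g_j` is a function
`K^*/(K^*)^n × K^*/(K^*)^n → ℂ` and `P_j, Q_j ∈ K[t]` are nonzero polynomials.  Then for
every `t₀ ∈ ℙ¹(K)` there is a punctured neighbourhood `U_{t₀}` of `t₀` such that, for
`t ∈ U_{t₀}`, the value of `g(t)` depends only on `(t − t₀) mod (K^*)^n`
(with `1/t` in place of `t − t₀` when `t₀ = ∞`). -/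
theorem stmt4 {K : Type*} [Field K] (v : K → WithTop ℤ) (hK : IsLocalField v)
    (n : ℕ) (hn : 0 < n) (hchar : ringChar K = 0 ∨ ¬ (ringChar K ∣ n))
    (r : ℕ) (g : Fin r → K → K → ℂ)
    (hg : ∀ (j : Fin r) (a b s t : K), s ≠ 0 → t ≠ 0 →
      g j (s ^ n * a) (t ^ n * b) = g j a b)
    (P Q : Fin r → Polynomial K) (hP : ∀ j, P j ≠ 0) (hQ : ∀ j, Q j ≠ 0) :
    (∀ t₀ : K, ∃ k : ℤ, ∀ t₁ t₂ : K, t₁ ≠ t₀ → t₂ ≠ t₀ →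
        (k : WithTop ℤ) ≤ v (t₁ - t₀) → (k : WithTop ℤ) ≤ v (t₂ - t₀) →
        (∀ j, (P j).eval t₁ ≠ 0 ∧ (Q j).eval t₁ ≠ 0) →
        (∀ j, (P j).eval t₂ ≠ 0 ∧ (Q j).eval t₂ ≠ 0) →
        (∃ s : K, s ≠ 0 ∧ t₁ - t₀ = s ^ n * (t₂ - t₀)) →
        (∏ j, g j ((P j).eval t₁) ((Q j).eval t₁)) =
          ∏ j, g j ((P j).eval t₂) ((Q j).eval t₂))
    ∧ (∃ k : ℤ, ∀ t₁ t₂ : K, v t₁ ≤ (k : WithTop ℤ) → v t₂ ≤ (k : WithTop ℤ) →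
        (∀ j, (P j).eval t₁ ≠ 0 ∧ (Q j).eval t₁ ≠ 0) →
        (∀ j, (P j).eval t₂ ≠ 0 ∧ (Q j).eval t₂ ≠ 0) →
        (∃ s : K, s ≠ 0 ∧ t₁⁻¹ = s ^ n * t₂⁻¹) →
        (∏ j, g j ((P j).eval t₁) ((Q j).eval t₁)) =
          ∏ j, g j ((P j).eval t₂) ((Q j).eval t₂)) := by
  have hnK : (n : K) ≠ 0 := by
    intro h
    have hdvd := (ringChar.spec K n).mp h
    rcases hchar with h0 | hd
    · rw [h0] at hdvd
      exact absurd (zero_dvd_iff.mp hdvd) (by omega)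
    · exact hd hdvd
  constructor
  · intro t₀
    choose kP hkP using fun j : Fin r => LFAux.key1 hK hn hnK (P j) (hP j) t₀
    choose kQ hkQ using fun j : Fin r => LFAux.key1 hK hn hnK (Q j) (hQ j) t₀
    obtain ⟨k, hk⟩ := Finite.exists_le (fun j : Fin r => max (kP j) (kQ j))
    refine ⟨k, fun t₁ t₂ h₁ h₂ hv₁ hv₂ hP₁ hP₂ hex => ?_⟩
    obtain ⟨s, hs, hrel⟩ := hex
    refine Finset.prod_congr rfl fun j _ => ?_
    have hkPj : ((kP j : ℤ) : WithTop ℤ) ≤ (k : WithTop ℤ) := by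
      exact_mod_cast le_trans (le_max_left _ _) (hk j)
    have hkQj : ((kQ j : ℤ) : WithTop ℤ) ≤ (k : WithTop ℤ) := by
      exact_mod_cast le_trans (le_max_right _ _) (hk j)
    obtain ⟨s', hs'0, hs'⟩ :=
      hkP j t₁ t₂ s h₁ h₂ (le_trans hkPj hv₁) (le_trans hkPj hv₂) hs hrel
    obtain ⟨s'', hs''0, hs''⟩ :=
      hkQ j t₁ t₂ s h₁ h₂ (le_trans hkQj hv₁) (le_trans hkQj hv₂) hs hrel
    rw [hs', hs'']
    exact hg j _ _ s' s'' hs'0 hs''0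
  · choose kP hkP using fun j : Fin r => LFAux.key2 hK hn hnK (P j) (hP j)
    choose kQ hkQ using fun j : Fin r => LFAux.key2 hK hn hnK (Q j) (hQ j)
    obtain ⟨M, hM⟩ := Finite.exists_le (fun j : Fin r => -(min (kP j) (kQ j)))
    refine ⟨-M, fun t₁ t₂ hv₁ hv₂ hP₁ hP₂ hex => ?_⟩
    obtain ⟨s, hs, hrel⟩ := hex
    refine Finset.prod_congr rfl fun j _ => ?_
    have hkPj : ((-M : ℤ) : WithTop ℤ) ≤ ((kP j : ℤ) : WithTop ℤ) := by
      have := hM j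
      rw [WithTop.coe_le_coe]
      omega
    have hkQj : ((-M : ℤ) : WithTop ℤ) ≤ ((kQ j : ℤ) : WithTop ℤ) := by
      have := hM j
      rw [WithTop.coe_le_coe]
      omega
    obtain ⟨s', hs'0, hs'⟩ :=
      hkP j t₁ t₂ s (le_trans hv₁ hkPj) (le_trans hv₂ hkPj) hs hrel
    obtain ⟨s'', hs''0, hs''⟩ :=
      hkQ j t₁ t₂ s (le_trans hv₁ hkQj) (le_trans hv₂ hkQj) hs hrel
    rw [hs', hs'']
    exact hg j _ _ s' s'' hs'0 hs''0
end

section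
/- Let K be a local field and n a positive integer with char(K) ∤ n. Let P ∈ K[x,y] be a nonzero homogeneous polynomial, and let R = {(x,y) ∈ K × K : min(v(x), v(y)) = 0}. Then for every t₀ ∈ ℙ¹(K) there is a punctured neighbourhood U_{t₀} of t₀ such that, for all (x,y) ∈ R with x/y ∈ U_{t₀} and P(x,y) ≠ 0, the class of P(x,y) in K^*/(K^*)^n depends only on the classes of x − t₀·y and of y in K^*/(K^*)^n (only on the classes of x and of y if t₀ = ∞). -/
namespace LFaux

variable {K : Type*} [Field K] {v : K → WithTop ℤ}

-- WithTop helpers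
lemma wt_cancel {t : WithTop ℤ} {a b : ℤ} (h : (b : WithTop ℤ) ≤ t + (a : ℤ)) :
    ((b - a : ℤ) : WithTop ℤ) ≤ t := by
  cases t with
  | top => exact le_top
  | coe c =>
      rw [← WithTop.coe_add, WithTop.coe_le_coe] at h
      rw [WithTop.coe_le_coe]
      omega

lemma v_one (h : IsLocalField v) : v 1 = 0 := by
  have h1 : v (1 : K) ≠ ⊤ := h.ne_top 1 one_ne_zero
  have := h.map_mul 1 1
  rw [mul_one] at this
  cases hv : v (1 : K) with
  | top => exact absurd hv h1
  | coe c =>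
      rw [hv, ← WithTop.coe_add, WithTop.coe_inj] at this
      have : c = 0 := by omega
      simp [this]

lemma v_neg (h : IsLocalField v) (x : K) : v (-x) = v x := by
  have hm : v (-1 : K) = 0 := by
    have h1 : v (-1 : K) ≠ ⊤ := h.ne_top (-1) (by norm_num)
    have := h.map_mul (-1) (-1)
    rw [neg_mul_neg, one_mul, v_one h] at this
    cases hv : v (-1 : K) with
    | top => exact absurd hv h1
    | coe c =>
        rw [hv, ← WithTop.coe_add] at this
        have h2 : ((c + c : ℤ) : WithTop ℤ) = ((0:ℤ) : WithTop ℤ) := by exact_mod_cast this.symm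
        have : c = 0 := by have := WithTop.coe_inj.mp h2; omega
        simp [this]
  have := h.map_mul (-1) x
  rw [neg_one_mul, hm, zero_add] at this
  exact this

lemma v_sub_comm (h : IsLocalField v) (x y : K) : v (x - y) = v (y - x) := by
  rw [← v_neg h (x - y), neg_sub]

lemma v_natCast (h : IsLocalField v) (m : ℕ) : 0 ≤ v (m : K) := by
  induction m with
  | zero => simp [h.map_zero]
  | succ k ih =>
      push_cast
      refine le_trans ?_ (h.min_le_add k 1)
      simp [le_min_iff, ih, le_of_eq (v_one h).symm]

lemma v_mul_ge (h : IsLocalField v) {x y : K} {a b : WithTop ℤ}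
    (hx : a ≤ v x) (hy : b ≤ v y) : a + b ≤ v (x * y) := by
  rw [h.map_mul]; exact add_le_add hx hy

lemma v_pow_ge (h : IsLocalField v) {x : K} (hx : 0 ≤ v x) (m : ℕ) : 0 ≤ v (x ^ m) := by
  induction m with
  | zero => simp [pow_zero, v_one h]
  | succ k ih =>
      rw [pow_succ, h.map_mul]
      exact add_nonneg ih hx

lemma v_pow_eq (h : IsLocalField v) {x : K} (hx : v x = 0) (m : ℕ) : v (x ^ m) = 0 := by
  induction m with
  | zero => simp [pow_zero, v_one h]
  | succ k ih => rw [pow_succ, h.map_mul, ih, hx, add_zero]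

lemma v_sum_ge (h : IsLocalField v) {ι : Type*} (s : Finset ι) (f : ι → K) {c : WithTop ℤ}
    (hf : ∀ i ∈ s, c ≤ v (f i)) : c ≤ v (∑ i ∈ s, f i) := by
  classical
  induction s using Finset.induction_on with
  | empty => simp [h.map_zero]
  | @insert a s' hnot ih =>
      rw [Finset.sum_insert hnot]
      refine le_trans ?_ (h.min_le_add _ _)
      exact le_min (hf a (Finset.mem_insert_self _ _))
        (ih fun i hi => hf i (Finset.mem_insert_of_mem hi))

lemma v_sub_ge (h : IsLocalField v) {x y : K} {c : WithTop ℤ}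
    (hx : c ≤ v x) (hy : c ≤ v y) : c ≤ v (x - y) := by
  rw [sub_eq_add_neg]
  refine le_trans (le_min hx ?_) (h.min_le_add _ _)
  rw [v_neg h]; exact hy

lemma eq_of_forall_le (h : IsLocalField v) {x : K}
    (hx : ∀ k : ℤ, (k : WithTop ℤ) ≤ v x) : x = 0 := by
  by_contra hne
  obtain ⟨c, hc⟩ := WithTop.ne_top_iff_exists.mp (h.ne_top x hne)
  have := hx (c + 1)
  rw [← hc, WithTop.coe_le_coe] at this
  omega

-- if v (x - 1) ≥ 1 then v x = 0
lemma v_eq_zero_of_near_one (h : IsLocalField v) {x : K}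
    (hx : (1 : WithTop ℤ) ≤ v (x - 1)) : v x = 0 := by
  have h0 : 0 ≤ v x := by
    have : v x = v ((x - 1) + 1) := by ring_nf
    rw [this]
    refine le_trans ?_ (h.min_le_add _ _)
    exact le_min (le_trans (by norm_num) hx) (le_of_eq (v_one h).symm)
  by_contra hne
  have hlt : 0 < v x := lt_of_le_of_ne h0 (Ne.symm hne)
  have h1 : (1 : WithTop ℤ) ≤ v x := by
    cases hv : v x with
    | top => exact le_top
    | coe c =>
        rw [hv] at hlt
        have hc : (0:ℤ) < c := by exact_mod_cast hlt
        exact_mod_cast (by omega : (1:ℤ) ≤ c)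
  have : (1 : WithTop ℤ) ≤ v 1 := by
    have : (1:K) = x - (x - 1) := by ring
    rw [show v (1:K) = v (x - (x-1)) by rw [← this]]
    exact v_sub_ge h h1 hx
  rw [v_one h] at this
  exact absurd this (by norm_num)

end LFaux

namespace Hensel

variable {K : Type*} [Field K] {v : K → WithTop ℤ}

lemma wt_mono {a b : ℤ} (hab : a ≤ b) : (a : WithTop ℤ) ≤ (b : WithTop ℤ) :=
  WithTop.coe_le_coe.mpr hab

lemma binom_aux (σ g : K) (m : ℕ) :
    (σ + g)^(m+1) = σ^(m+1) + (m+1:K) * σ^m * g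
      + g^2 * ∑ i ∈ Finset.range m, g^i * σ^(m-(i+1)) * ((m+1).choose (i+2) : K) := by
  rw [add_comm σ g, add_pow, Finset.sum_range_succ', Finset.sum_range_succ', Finset.mul_sum]
  have hsum : ∀ i ∈ Finset.range m,
      g^(i+1+1) * σ^(m+1-(i+1+1)) * ((m+1).choose (i+1+1) : K)
        = g^2 * (g^i * σ^(m-(i+1)) * ((m+1).choose (i+2) : K)) := by
    intro i _
    rw [show m+1-(i+1+1) = m-(i+1) by omega, show i+1+1 = i+2 from rfl, pow_add]
    ring
  rw [Finset.sum_congr rfl hsum]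
  simp only [pow_zero, pow_one, Nat.sub_zero, Nat.choose_zero_right, Nat.choose_one_right,
    Nat.cast_one, one_mul, mul_one, Nat.add_sub_cancel]
  push_cast [Nat.choose_one_right]
  ring

lemma binom (σ hh : K) (m : ℕ) :
    (σ - hh)^(m+1) = σ^(m+1) - (m+1:K) * σ^m * hh
      + hh^2 * ∑ i ∈ Finset.range m, (-hh)^i * σ^(m-(i+1)) * ((m+1).choose (i+2) : K) := by
  have := binom_aux σ (-hh) m
  rw [show σ + -hh = σ - hh by ring] at this
  rw [this]
  ring

open LFaux in
lemma hensel (h : IsLocalField v) (n : ℕ) (hn : 0 < n) (hnK : (n:K) ≠ 0) :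
    ∃ M : ℤ, 1 ≤ M ∧ ∀ u : K, (M : WithTop ℤ) ≤ v (u - 1) →
      ∃ s : K, s ≠ 0 ∧ u = s ^ n := by
  obtain ⟨ν, hν⟩ := WithTop.ne_top_iff_exists.mp (h.ne_top _ hnK)
  have hν0 : 0 ≤ ν := by
    have := v_natCast h n
    rw [← hν] at this
    exact_mod_cast this
  refine ⟨2*ν+1, by omega, ?_⟩
  intro u hu
  obtain ⟨m, hm⟩ : ∃ m, n = m + 1 := ⟨n - 1, by omega⟩
  set F : K → K := fun s => s - (s^n - u) / ((n:K) * s^(n-1)) with hF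
  set a : ℕ → K := fun k => F^[k] 1 with ha
  have ha0 : a 0 = 1 := rfl
  have haS : ∀ k, a (k+1) = F (a k) := by
    intro k
    simp [ha, Function.iterate_succ_apply']
  -- one Newton step
  have step : ∀ k : ℕ,
      (((ν+1 : ℤ) : WithTop ℤ) ≤ v (a k - 1) ∧
       ((2*ν+1+(k:ℤ) : ℤ) : WithTop ℤ) ≤ v (a k ^ n - u)) →
      ((((ν+1 : ℤ) : WithTop ℤ) ≤ v (a (k+1) - 1) ∧
       ((2*ν+1+((k:ℤ)+1) : ℤ) : WithTop ℤ) ≤ v (a (k+1) ^ n - u)) ∧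
       ((ν+1+(k:ℤ) : ℤ) : WithTop ℤ) ≤ v (a (k+1) - a k)) := by
    intro k ⟨ih1, ih2⟩
    set σ := a k with hσ
    have hvσ : v σ = 0 := by
      apply v_eq_zero_of_near_one h
      exact le_trans (wt_mono (by omega)) ih1
    have hσ0 : σ ≠ 0 := by
      intro hc
      rw [hc, h.map_zero] at hvσ
      exact absurd hvσ (by simp)
    have hden0 : (n:K) * σ^(n-1) ≠ 0 := mul_ne_zero hnK (pow_ne_zero _ hσ0)
    have hvden : v ((n:K) * σ^(n-1)) = (ν : WithTop ℤ) := by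
      rw [h.map_mul, v_pow_eq h hvσ, ← hν, add_zero]
    set hh : K := (σ^n - u) / ((n:K) * σ^(n-1)) with hhh
    have hhden : hh * ((n:K) * σ^(n-1)) = σ^n - u := div_mul_cancel₀ _ hden0
    have hvhh : ((ν+1+(k:ℤ) : ℤ) : WithTop ℤ) ≤ v hh := by
      have h1 : ((2*ν+1+(k:ℤ) : ℤ) : WithTop ℤ) ≤ v hh + (ν : WithTop ℤ) := by
        rw [← hvden, ← h.map_mul, hhden]
        exact ih2
      have := wt_cancel (a := ν) (b := 2*ν+1+(k:ℤ)) h1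
      exact le_trans (wt_mono (by omega)) this
    have hvhh0 : (0 : WithTop ℤ) ≤ v hh := by
      refine le_trans ?_ hvhh
      exact_mod_cast wt_mono (by omega)
    have hak1 : a (k+1) = σ - hh := by rw [haS k, hF]
    -- sum bound
    set E : K := ∑ i ∈ Finset.range m, (-hh)^i * σ^(m-(i+1)) * ((m+1).choose (i+2) : K)
      with hE
    have hvE : (0 : WithTop ℤ) ≤ v E := by
      apply v_sum_ge h
      intro i _
      have h1 : (0 : WithTop ℤ) ≤ v ((-hh)^i) := by
        apply v_pow_ge h
        rw [v_neg h]; exact hvhh0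
      have h2 : (0 : WithTop ℤ) ≤ v (σ^(m-(i+1))) := v_pow_ge h (le_of_eq hvσ.symm) _
      have h3 : (0 : WithTop ℤ) ≤ v (((m+1).choose (i+2) : K)) := v_natCast h _
      calc (0 : WithTop ℤ) = 0 + 0 + 0 := by simp
        _ ≤ _ := v_mul_ge h (v_mul_ge h h1 h2) h3
    have hkey : a (k+1) ^ n - u = hh^2 * E := by
      rw [hak1, hm, binom σ hh m, ← hE]
      have e1 : ((m:K)+1) * σ^m * hh = σ^n - u := by
        have e2 : ((m:K)+1) = (n:K) := by rw [hm]; push_cast; ring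
        have e3 : σ^m = σ^(n-1) := by rw [hm, Nat.add_sub_cancel]
        rw [e2, e3, show (n:K) * σ^(n-1) * hh = hh * ((n:K)*σ^(n-1)) by ring, hhden]
      rw [e1, show σ^(m+1) = σ^n by rw [← hm]]
      ring
    refine ⟨⟨?_, ?_⟩, ?_⟩
    · rw [hak1, show σ - hh - 1 = (σ - 1) - hh by ring]
      exact v_sub_ge h ih1 (le_trans (wt_mono (by omega)) hvhh)
    · rw [hkey]
      have : ((ν+1+(k:ℤ) + (ν+1+(k:ℤ)) + 0 : ℤ) : WithTop ℤ) ≤ v (hh^2 * E) := by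
        push_cast
        refine v_mul_ge h ?_ hvE
        rw [pow_two]
        exact_mod_cast v_mul_ge h hvhh hvhh
      exact le_trans (wt_mono (by omega)) this
    · rw [hak1, show σ - hh - σ = -hh by ring, v_neg h]
      exact hvhh
  have key : ∀ k : ℕ,
      ((ν+1 : ℤ) : WithTop ℤ) ≤ v (a k - 1) ∧
      ((2*ν+1+(k:ℤ) : ℤ) : WithTop ℤ) ≤ v (a k ^ n - u) := by
    intro k
    induction k with
    | zero =>
        constructor
        · rw [ha0, sub_self, h.map_zero]; exact le_top
        · rw [ha0, one_pow, v_sub_comm h]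
          simpa using hu
    | succ k ih =>
        have := (step k ih).1
        constructor
        · exact this.1
        · refine le_trans (wt_mono ?_) this.2
          push_cast
          omega
  have diff : ∀ k : ℕ, ((ν+1+(k:ℤ) : ℤ) : WithTop ℤ) ≤ v (a (k+1) - a k) :=
    fun k => (step k (key k)).2
  have tele : ∀ p t : ℕ, ((ν+1+(p:ℤ) : ℤ) : WithTop ℤ) ≤ v (a (p+t) - a p) := by
    intro p t
    induction t with
    | zero => rw [Nat.add_zero, sub_self, h.map_zero]; exact le_top
    | succ t ih =>
        rw [show a (p+(t+1)) - a p = (a (p+t+1) - a (p+t)) + (a (p+t) - a p) by ring_nf]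
        refine le_trans (le_min ?_ ih) (h.min_le_add _ _)
        refine le_trans (wt_mono ?_) (diff (p+t))
        push_cast; omega
  have cauchy : ∀ k : ℤ, ∃ N : ℕ, ∀ p p' : ℕ, N ≤ p → N ≤ p' →
      (k : WithTop ℤ) ≤ v (a p - a p') := by
    intro k
    refine ⟨(k - ν - 1).toNat, ?_⟩
    have hbound : ∀ p p' : ℕ, (k - ν - 1).toNat ≤ p → p ≤ p' →
        (k : WithTop ℤ) ≤ v (a p' - a p) := by
      intro p p' hp hpp'
      obtain ⟨t, rfl⟩ := Nat.exists_eq_add_of_le hpp'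
      refine le_trans (wt_mono ?_) (tele p t)
      have : (k - ν - 1 : ℤ) ≤ (p : ℤ) := le_trans (Int.self_le_toNat _) (by exact_mod_cast hp)
      omega
    intro p p' hp hp'
    rcases le_total p' p with hle | hle
    · exact hbound p' p hp' hle
    · rw [v_sub_comm h]; exact hbound p p' hp hle
  obtain ⟨L, hL⟩ := h.complete a cauchy
  have hva : ∀ k, v (a k) = 0 := fun k =>
    v_eq_zero_of_near_one h (le_trans (wt_mono (by omega)) (key k).1)
  have hvL : (0 : WithTop ℤ) ≤ v L := by
    obtain ⟨N, hN⟩ := hL 0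
    have h1 := hN N le_rfl
    rw [show L = a N - (a N - L) by ring]
    refine v_sub_ge h (le_of_eq (hva N).symm) ?_
    exact_mod_cast h1
  have hLn : L ^ n = u := by
    have : L ^ n - u = 0 := by
      apply eq_of_forall_le h
      intro k
      obtain ⟨N, hN⟩ := hL k
      set p := max N (k - (2*ν+1)).toNat with hp
      have h1 : (k : WithTop ℤ) ≤ v (a p - L) := hN p (le_max_left _ _)
      have h2 : (k : WithTop ℤ) ≤ v (a p ^ n - u) := by
        refine le_trans (wt_mono ?_) (key p).2
        have : (k - (2*ν+1) : ℤ) ≤ (p : ℤ) :=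
          le_trans (Int.self_le_toNat _) (by exact_mod_cast le_max_right N _)
        omega
      have h3 : (k : WithTop ℤ) ≤ v (L ^ n - a p ^ n) := by
        rw [← geom_sum₂_mul L (a p) n, h.map_mul]
        have hs : (0 : WithTop ℤ) ≤ v (∑ i ∈ Finset.range n, L ^ i * a p ^ (n-1-i)) := by
          apply v_sum_ge h
          intro i _
          calc (0 : WithTop ℤ) = 0 + 0 := by simp
            _ ≤ _ := v_mul_ge h (v_pow_ge h hvL i) (v_pow_ge h (le_of_eq (hva p).symm) _)
        have hd : (k : WithTop ℤ) ≤ v (L - a p) := by rw [v_sub_comm h]; exact h1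
        calc (k : WithTop ℤ) = 0 + k := by simp
          _ ≤ _ := add_le_add hs hd
      rw [show L ^ n - u = (L ^ n - a p ^ n) + (a p ^ n - u) by ring]
      exact le_trans (le_min h3 h2) (h.min_le_add _ _)
    exact sub_eq_zero.mp this
  have hu0 : u ≠ 0 := by
    have h0 := v_eq_zero_of_near_one h (le_trans (wt_mono (by omega)) hu)
    intro hc
    rw [hc, h.map_zero] at h0
    simp at h0
  have hL0 : L ≠ 0 := by
    intro hc
    apply hu0
    rw [← hLn, hc, zero_pow (by omega)]
  exact ⟨L, hL0, hLn.symm⟩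

end Hensel

namespace Main

open LFaux Hensel

variable {K : Type*} [Field K] {v : K → WithTop ℤ}

lemma exists_int_le (t : WithTop ℤ) : ∃ c : ℤ, (c : WithTop ℤ) ≤ t := by
  cases t with
  | top => exact ⟨0, le_top⟩
  | coe b => exact ⟨b, le_rfl⟩

lemma exists_lb (f : ℕ → WithTop ℤ) (N : ℕ) : ∃ c : ℤ, ∀ j < N, (c : WithTop ℤ) ≤ f j := by
  induction N with
  | zero => exact ⟨0, by omega⟩
  | succ N ih =>
      obtain ⟨c, hc⟩ := ih
      obtain ⟨b, hb⟩ := exists_int_le (f N)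
      refine ⟨min c b, fun j hj => ?_⟩
      rcases Nat.lt_succ_iff_lt_or_eq.mp hj with hlt | rfl
      · exact le_trans (wt_mono (min_le_left _ _)) (hc j hlt)
      · exact le_trans (wt_mono (min_le_right _ _)) hb

lemma eval_sub_coeff_zero (h : IsLocalField v) (q : Polynomial K) :
    ∃ c : ℤ, ∀ w : K, (0 : WithTop ℤ) ≤ v w →
      (c : WithTop ℤ) + v w ≤ v (q.eval w - q.coeff 0) := by
  obtain ⟨c, hc⟩ := exists_lb (fun j => v (q.coeff j)) (q.natDegree + 1)
  have hall : ∀ j : ℕ, (c : WithTop ℤ) ≤ v (q.coeff j) := by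
    intro j
    by_cases hj : j < q.natDegree + 1
    · exact hc j hj
    · rw [q.coeff_eq_zero_of_natDegree_lt (by omega), h.map_zero]; exact le_top
  refine ⟨c, fun w hw => ?_⟩
  rw [Polynomial.eval_eq_sum_range, Finset.sum_range_succ']
  simp only [pow_zero, mul_one, add_sub_cancel_right]
  apply v_sum_ge h
  intro i _
  rw [show q.coeff (i+1) * w^(i+1) = (q.coeff (i+1) * w^i) * w by rw [pow_succ]; ring]
  exact v_mul_ge h (by simpa using v_mul_ge h (hall (i+1)) (v_pow_ge h hw i)) le_rfl

lemma poly_shape (h : IsLocalField v) (M : ℤ) (q : Polynomial K) (hq : q ≠ 0) :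
    ∃ (i₀ : ℕ) (a : K), a ≠ 0 ∧ ∃ k : ℤ, 0 ≤ k ∧ ∀ w : K, (k : WithTop ℤ) ≤ v w →
      ∃ ε : K, (M : WithTop ℤ) ≤ v ε ∧ q.eval w = a * w ^ i₀ * (1 + ε) := by
  obtain ⟨r, hr, hnd⟩ := q.exists_eq_pow_rootMultiplicity_mul_and_not_dvd hq 0
  rw [Polynomial.C_0, sub_zero] at hr hnd
  set i₀ := q.rootMultiplicity 0 with hi₀
  set a := r.coeff 0 with ha'
  have ha : a ≠ 0 := by rwa [Polynomial.X_dvd_iff] at hnd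
  obtain ⟨α, hα⟩ := WithTop.ne_top_iff_exists.mp (h.ne_top a ha)
  obtain ⟨c, hc⟩ := eval_sub_coeff_zero h r
  refine ⟨i₀, a, ha, max 0 (M + α - c), le_max_left _ _, fun w hw => ?_⟩
  have hw0 : (0 : WithTop ℤ) ≤ v w := le_trans (wt_mono (le_max_left _ _)) hw
  refine ⟨(r.eval w - a) / a, ?_, ?_⟩
  · have hεa : (r.eval w - a) / a * a = r.eval w - a := div_mul_cancel₀ _ ha
    have h1 : ((M + α : ℤ) : WithTop ℤ) ≤ v ((r.eval w - a) / a) + (α : WithTop ℤ) := by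
      rw [hα, ← h.map_mul, hεa]
      calc ((M + α : ℤ) : WithTop ℤ) = (c : WithTop ℤ) + ((M + α - c : ℤ) : WithTop ℤ) := by
            rw [← WithTop.coe_add]; norm_num
        _ ≤ (c : WithTop ℤ) + v w :=
            add_le_add le_rfl (le_trans (wt_mono (le_max_right _ _)) hw)
        _ ≤ _ := hc w hw0
    have := wt_cancel (a := α) (b := M + α) h1
    exact le_trans (wt_mono (by omega)) this
  · have : q.eval w = w ^ i₀ * r.eval w := by
      rw [hr]; simp
    rw [this, mul_add, mul_one]
    have h2 : a * ((Polynomial.eval w r - a) / a) = Polynomial.eval w r - a := by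
      field_simp
    rw [show a * w ^ i₀ * ((Polynomial.eval w r - a) / a)
        = w ^ i₀ * (a * ((Polynomial.eval w r - a) / a)) by ring, h2]
    ring

lemma eval_mul_homog {R : Type*} [CommRing R] {σ : Type*} {P : MvPolynomial σ R} {d : ℕ}
    (hh : P.IsHomogeneous d) (c : R) (g : σ → R) :
    MvPolynomial.eval (fun i => c * g i) P = c ^ d * MvPolynomial.eval g P := by
  rw [MvPolynomial.eval_eq, MvPolynomial.eval_eq, Finset.mul_sum]
  apply Finset.sum_congr rfl
  intro m hm
  have hdeg : ∑ i ∈ m.support, m i = d := by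
    have := hh (MvPolynomial.mem_support_iff.mp hm)
    replace this : Finsupp.degree m = d := by rw [Finsupp.degree_eq_weight_one]; exact this
    exact this
  have : ∏ i ∈ m.support, (c * g i) ^ m i
      = c ^ d * ∏ i ∈ m.support, g i ^ m i := by
    rw [← hdeg, ← Finset.prod_pow_eq_pow_sum]
    rw [← Finset.prod_mul_distrib]
    apply Finset.prod_congr rfl
    intro i _
    rw [mul_pow]
  rw [this]
  ring

end Main

namespace Main

open LFaux Hensel

variable {K : Type*} [Field K] {v : K → WithTop ℤ}

lemma core (h : IsLocalField v) {n : ℕ} (hn : 0 < n) (hnK : ((n:ℕ):K) ≠ 0)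
    (q : Polynomial K) :
    ∃ k : ℤ, 0 ≤ k ∧ ∀ (Y₁ Y₂ w₁ w₂ c t : K) (d : ℕ),
      w₁ ≠ 0 → w₂ ≠ 0 → c ≠ 0 → t ≠ 0 →
      (k : WithTop ℤ) ≤ v w₁ → (k : WithTop ℤ) ≤ v w₂ →
      w₁ = c ^ n * w₂ → Y₁ = t ^ n * Y₂ →
      Y₁ ^ d * q.eval w₁ ≠ 0 →
      ∃ s : K, s ≠ 0 ∧ Y₁ ^ d * q.eval w₁ = s ^ n * (Y₂ ^ d * q.eval w₂) := by
  by_cases hq : q = 0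
  · refine ⟨0, le_rfl, ?_⟩
    intro Y₁ Y₂ w₁ w₂ c t d _ _ _ _ _ _ _ _ hne
    exact absurd (by rw [hq]; simp) hne
  obtain ⟨M, hM1, hhens⟩ := hensel h n hn hnK
  obtain ⟨i₀, a, ha, k, hk0, hshape⟩ := poly_shape h (max M 1) q hq
  refine ⟨k, hk0, ?_⟩
  intro Y₁ Y₂ w₁ w₂ c t d hw₁0 hw₂0 hc0 ht0 hvw₁ hvw₂ hww hYY hne
  obtain ⟨ε₁, hvε₁, heq₁⟩ := hshape w₁ hvw₁
  obtain ⟨ε₂, hvε₂, heq₂⟩ := hshape w₂ hvw₂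
  have hv1ε₂ : v (1 + ε₂) = 0 := by
    apply v_eq_zero_of_near_one h
    rw [add_sub_cancel_left]
    exact le_trans (wt_mono (by omega)) (le_trans (wt_mono (le_max_right M 1)) hvε₂)
  have h1ε₂0 : (1 + ε₂) ≠ 0 := by
    intro hcon
    rw [hcon, h.map_zero] at hv1ε₂
    simp at hv1ε₂
  set ρ : K := (1 + ε₁) / (1 + ε₂) with hρ
  have hρ1 : (ρ - 1) * (1 + ε₂) = ε₁ - ε₂ := by
    rw [hρ, sub_mul, div_mul_cancel₀ _ h1ε₂0]; ring
  have hvρ : (M : WithTop ℤ) ≤ v (ρ - 1) := by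
    have : v (ρ - 1) + 0 = v (ε₁ - ε₂) := by
      rw [← hv1ε₂, ← h.map_mul, hρ1]
    rw [← add_zero (v (ρ - 1)), this]
    refine v_sub_ge h ?_ ?_ <;>
      exact le_trans (wt_mono (le_max_left M 1)) (by assumption)
  obtain ⟨s₀, hs₀0, hs₀⟩ := hhens ρ hvρ
  have hρε : s₀ ^ n * (1 + ε₂) = 1 + ε₁ := by
    rw [← hs₀, hρ, div_mul_cancel₀ _ h1ε₂0]
  refine ⟨t ^ d * c ^ i₀ * s₀, mul_ne_zero (mul_ne_zero (pow_ne_zero _ ht0) (pow_ne_zero _ hc0)) hs₀0, ?_⟩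
  rw [heq₁, heq₂, hww, hYY, ← hρε]
  ring

lemma eval_poly1 (t₀ : K) (P : MvPolynomial (Fin 2) K) (w : K) :
    Polynomial.eval w (MvPolynomial.aeval ![Polynomial.X + Polynomial.C t₀, 1] P)
      = MvPolynomial.eval ![w + t₀, 1] P := by
  have h1 : Polynomial.eval w (MvPolynomial.aeval ![Polynomial.X + Polynomial.C t₀, 1] P)
      = (Polynomial.aeval w).comp
          (MvPolynomial.aeval ![Polynomial.X + Polynomial.C t₀, (1 : Polynomial K)]) P := by
    rw [AlgHom.coe_comp, Function.comp_apply, ← Polynomial.coe_aeval_eq_eval]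
  rw [h1, MvPolynomial.comp_aeval]
  have h2 : (fun i => Polynomial.aeval w ((![Polynomial.X + Polynomial.C t₀, 1] :
      Fin 2 → Polynomial K) i)) = ![w + t₀, 1] := by
    funext i
    fin_cases i <;> simp
  rw [h2, ← MvPolynomial.coe_aeval_eq_eval]
  rfl

lemma eval_poly2 (P : MvPolynomial (Fin 2) K) (w : K) :
    Polynomial.eval w (MvPolynomial.aeval ![1, Polynomial.X] P)
      = MvPolynomial.eval ![1, w] P := by
  have h1 : Polynomial.eval w (MvPolynomial.aeval ![1, Polynomial.X] P)
      = (Polynomial.aeval w).comp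
          (MvPolynomial.aeval ![(1 : Polynomial K), Polynomial.X]) P := by
    rw [AlgHom.coe_comp, Function.comp_apply, ← Polynomial.coe_aeval_eq_eval]
  rw [h1, MvPolynomial.comp_aeval]
  have h2 : (fun i => Polynomial.aeval w ((![1, Polynomial.X] :
      Fin 2 → Polynomial K) i)) = ![1, w] := by
    funext i
    fin_cases i <;> simp
  rw [h2, ← MvPolynomial.coe_aeval_eq_eval]
  rfl

lemma v_flip (h : IsLocalField v) {x y : K} (hx : x ≠ 0) (hy : y ≠ 0) {k : ℤ}
    (hle : v (x/y) ≤ ((-k : ℤ) : WithTop ℤ)) : (k : WithTop ℤ) ≤ v (y/x) := by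
  have hxy : x/y ≠ 0 := div_ne_zero hx hy
  have hyx : y/x ≠ 0 := div_ne_zero hy hx
  obtain ⟨β, hβ⟩ := WithTop.ne_top_iff_exists.mp (h.ne_top _ hxy)
  obtain ⟨γ, hγ⟩ := WithTop.ne_top_iff_exists.mp (h.ne_top _ hyx)
  have hprod : (x/y) * (y/x) = 1 := by field_simp
  have h0 : v (x/y) + v (y/x) = 0 := by rw [← h.map_mul, hprod, v_one h]
  rw [← hβ, ← hγ, ← WithTop.coe_add] at h0
  have hβγ : β + γ = 0 := by exact_mod_cast h0
  rw [← hβ] at hle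
  have hβk : β ≤ -k := by exact_mod_cast hle
  rw [← hγ]
  exact_mod_cast (by omega : k ≤ γ)

end Main

set_option maxHeartbeats 1000000 in
open LFaux Hensel Main in
/-- Let `K` be a local field and `n` a positive integer with `char K ∤ n`.
Let `P ∈ K[x,y]` be a nonzero homogeneous polynomial, and let
`R = {(x,y) ∈ K × K : min(v x, v y) = 0}`.  Then for every `t₀ ∈ ℙ¹(K)` there is a
punctured neighbourhood `U_{t₀}` of `t₀` such that, for all `(x,y) ∈ R` with
`x/y ∈ U_{t₀}` and `P(x,y) ≠ 0`, the class of `P(x,y)` in `K^*/(K^*)^n` depends only on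
the classes of `x − t₀·y` and of `y` in `K^*/(K^*)^n` (only on the classes of `x` and of
`y` if `t₀ = ∞`). -/
theorem stmt7 {K : Type*} [Field K] (v : K → WithTop ℤ) (hK : IsLocalField v)
    (n : ℕ) (hn : 0 < n) (hchar : ringChar K = 0 ∨ ¬ (ringChar K ∣ n))
    (P : MvPolynomial (Fin 2) K) (hP : P ≠ 0) (d : ℕ) (hhom : P.IsHomogeneous d) :
    (∀ t₀ : K, ∃ k : ℤ, ∀ x₁ y₁ x₂ y₂ : K,
        min (v x₁) (v y₁) = 0 → min (v x₂) (v y₂) = 0 →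
        y₁ ≠ 0 → y₂ ≠ 0 → x₁ / y₁ ≠ t₀ → x₂ / y₂ ≠ t₀ →
        (k : WithTop ℤ) ≤ v (x₁ / y₁ - t₀) → (k : WithTop ℤ) ≤ v (x₂ / y₂ - t₀) →
        MvPolynomial.eval ![x₁, y₁] P ≠ 0 → MvPolynomial.eval ![x₂, y₂] P ≠ 0 →
        (∃ s : K, s ≠ 0 ∧ x₁ - t₀ * y₁ = s ^ n * (x₂ - t₀ * y₂)) →
        (∃ s : K, s ≠ 0 ∧ y₁ = s ^ n * y₂) →
        ∃ s : K, s ≠ 0 ∧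
          MvPolynomial.eval ![x₁, y₁] P = s ^ n * MvPolynomial.eval ![x₂, y₂] P)
    ∧ (∃ k : ℤ, ∀ x₁ y₁ x₂ y₂ : K,
        min (v x₁) (v y₁) = 0 → min (v x₂) (v y₂) = 0 →
        y₁ ≠ 0 → y₂ ≠ 0 →
        v (x₁ / y₁) ≤ (k : WithTop ℤ) → v (x₂ / y₂) ≤ (k : WithTop ℤ) →
        MvPolynomial.eval ![x₁, y₁] P ≠ 0 → MvPolynomial.eval ![x₂, y₂] P ≠ 0 →
        (∃ s : K, s ≠ 0 ∧ x₁ = s ^ n * x₂) →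
        (∃ s : K, s ≠ 0 ∧ y₁ = s ^ n * y₂) →
        ∃ s : K, s ≠ 0 ∧
          MvPolynomial.eval ![x₁, y₁] P = s ^ n * MvPolynomial.eval ![x₂, y₂] P) := by
  have hnK : ((n:ℕ):K) ≠ 0 := by
    intro hc
    have hdvd : ringChar K ∣ n := (ringChar.spec K n).mp hc
    rcases hchar with h0 | hnd
    · rw [h0] at hdvd
      exact absurd (Nat.eq_zero_of_zero_dvd hdvd) (by omega)
    · exact hnd hdvd
  constructor
  · -- finite t₀
    intro t₀
    set p : Polynomial K := MvPolynomial.aeval ![Polynomial.X + Polynomial.C t₀, 1] P with hp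
    have hev : ∀ x y : K, y ≠ 0 →
        MvPolynomial.eval ![x, y] P = y ^ d * p.eval (x / y - t₀) := by
      intro x y hy
      have harr : (![x, y] : Fin 2 → K) = fun i => y * (![x / y, 1] i) := by
        funext i
        fin_cases i
        · show x = y * (x / y); field_simp
        · show y = y * 1; ring
      rw [harr, eval_mul_homog hhom y ![x / y, 1], hp, eval_poly1, sub_add_cancel]
    have hz : ∀ x y : K, y ≠ 0 → x / y - t₀ = (x - t₀ * y) / y := by
      intro x y hy; field_simp
    obtain ⟨k, hk0, hcore⟩ := core hK hn hnK p
    refine ⟨k, ?_⟩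
    intro x₁ y₁ x₂ y₂ hmin₁ hmin₂ hy₁ hy₂ hne₁ hne₂ hv₁ hv₂ hP₁ hP₂ hzcl hycl
    obtain ⟨s, hs0, hsz⟩ := hzcl
    obtain ⟨t, ht0, hty⟩ := hycl
    have hww : x₁ / y₁ - t₀ = (s / t) ^ n * (x₂ / y₂ - t₀) := by
      rw [hz x₁ y₁ hy₁, hz x₂ y₂ hy₂, hsz, hty, div_pow]
      field_simp
    have hres := hcore y₁ y₂ (x₁ / y₁ - t₀) (x₂ / y₂ - t₀) (s / t) t d
      (sub_ne_zero.mpr hne₁) (sub_ne_zero.mpr hne₂) (div_ne_zero hs0 ht0) ht0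
      hv₁ hv₂ hww hty (by rw [← hev x₁ y₁ hy₁]; exact hP₁)
    obtain ⟨s', hs'0, hs'⟩ := hres
    exact ⟨s', hs'0, by rw [hev x₁ y₁ hy₁, hev x₂ y₂ hy₂]; exact hs'⟩
  · -- t₀ = ∞
    set p : Polynomial K := MvPolynomial.aeval ![1, Polynomial.X] P with hp
    have hev : ∀ x y : K, x ≠ 0 →
        MvPolynomial.eval ![x, y] P = x ^ d * p.eval (y / x) := by
      intro x y hx
      have harr : (![x, y] : Fin 2 → K) = fun i => x * (![1, y / x] i) := by
        funext i
        fin_cases i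
        · show x = x * 1; ring
        · show y = x * (y / x); field_simp
      rw [harr, eval_mul_homog hhom x ![1, y / x], hp, eval_poly2]
    obtain ⟨k, hk0, hcore⟩ := core hK hn hnK p
    refine ⟨-k, ?_⟩
    intro x₁ y₁ x₂ y₂ hmin₁ hmin₂ hy₁ hy₂ hv₁ hv₂ hP₁ hP₂ hxcl hycl
    obtain ⟨s, hs0, hsx⟩ := hxcl
    obtain ⟨t, ht0, hty⟩ := hycl
    have hx₁ : x₁ ≠ 0 := by
      intro hc
      rw [hc, zero_div, hK.map_zero] at hv₁
      exact WithTop.coe_ne_top (WithTop.top_le_iff.mp hv₁)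
    have hx₂ : x₂ ≠ 0 := by
      intro hc
      rw [hc, zero_div, hK.map_zero] at hv₂
      exact WithTop.coe_ne_top (WithTop.top_le_iff.mp hv₂)
    have hflip₁ : (k : WithTop ℤ) ≤ v (y₁ / x₁) := by
      refine v_flip hK hx₁ hy₁ ?_
      rw [show (-k : ℤ) = -k from rfl]
      exact_mod_cast hv₁
    have hflip₂ : (k : WithTop ℤ) ≤ v (y₂ / x₂) := by
      refine v_flip hK hx₂ hy₂ ?_
      exact_mod_cast hv₂
    have hww : y₁ / x₁ = (t / s) ^ n * (y₂ / x₂) := by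
      rw [hty, hsx, div_pow]
      field_simp
    have hres := hcore x₁ x₂ (y₁ / x₁) (y₂ / x₂) (t / s) s d
      (div_ne_zero hy₁ hx₁) (div_ne_zero hy₂ hx₂) (div_ne_zero ht0 hs0) hs0
      hflip₁ hflip₂ hww hsx (by rw [← hev x₁ y₁ hx₁]; exact hP₁)
    obtain ⟨s', hs'0, hs'⟩ := hres
    exact ⟨s', hs'0, by rw [hev x₁ y₁ hx₁, hev x₂ y₂ hx₂]; exact hs'⟩
end

section
/- Let K be a local field and n a positive integer with char(K) ∤ n. Let g(x,y) = ∏_{j=1}^{r} g_j(P_j(x,y), Q_j(x,y)), where each g_j is a function K^*/(K^*)^n × K^*/(K^*)^n → ℂ and P_j, Q_j ∈ K[x,y] are nonzero homogeneous polynomials. Let R = {(x,y) ∈ K × K : min(v(x), v(y)) = 0}. Then for every t₀ ∈ ℙ¹(K) there is a punctured neighbourhood U_{t₀} of t₀ such that, for all (x,y) ∈ R with x/y ∈ U_{t₀} at which g is defined, the value of g(x,y) depends only on the classes of x − t₀·y and of y in K^*/(K^*)^n (only on the classes of x and of y if t₀ = ∞). -/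
namespace Stmt8Aux

variable {K : Type*} [Field K] {v : K → WithTop ℤ}

lemma v_eq_top (hK : IsLocalField v) {x : K} (h : v x = ⊤) : x = 0 := by
  by_contra hx; exact hK.ne_top x hx h

lemma v_one (hK : IsLocalField v) : v 1 = 0 := by
  have h := hK.map_mul 1 1
  rw [mul_one] at h
  have h1 : v 1 ≠ ⊤ := hK.ne_top 1 one_ne_zero
  cases hv : v (1 : K) with
  | top => exact absurd hv h1
  | coe a =>
    rw [hv, ← WithTop.coe_add] at h
    have := WithTop.coe_inj.mp h
    have : a = 0 := by omega
    simp [this]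

lemma v_neg (hK : IsLocalField v) (x : K) : v (-x) = v x := by
  have hm1 : v (-1 : K) = 0 := by
    have h : v ((-1 : K) * (-1)) = v (-1 : K) + v (-1) := hK.map_mul _ _
    rw [neg_mul_neg, one_mul, v_one hK] at h
    cases hv : v (-1 : K) with
    | top => exact absurd hv (hK.ne_top _ (by norm_num))
    | coe a =>
      rw [hv, ← WithTop.coe_add] at h
      have := WithTop.coe_inj.mp h.symm
      have : a = 0 := by omega
      simp [this]
  calc v (-x) = v ((-1) * x) := by ring_nf
    _ = v (-1 : K) + v x := hK.map_mul _ _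
    _ = v x := by rw [hm1, zero_add]

lemma v_sub_comm (hK : IsLocalField v) (x y : K) : v (x - y) = v (y - x) := by
  rw [← v_neg hK (x - y)]; ring_nf

lemma v_min_le_sub (hK : IsLocalField v) (x y : K) : min (v x) (v y) ≤ v (x - y) := by
  have := hK.min_le_add x (-y)
  rw [v_neg hK] at this
  simpa [sub_eq_add_neg] using this

lemma v_add_eq_of_lt (hK : IsLocalField v) {x y : K} (h : v x < v y) : v (x + y) = v x := by
  refine le_antisymm ?_ ?_
  · have h2 := hK.min_le_add (x + y) (-y)
    rw [v_neg hK, add_neg_cancel_right] at h2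
    rcases min_le_iff.mp h2 with h3 | h3
    · exact h3
    · exact absurd h3 (not_le.mpr h)
  · have := hK.min_le_add x y
    rwa [min_eq_left h.le] at this

lemma v_pow_zero (hK : IsLocalField v) {x : K} (h : v x = 0) (m : ℕ) : v (x ^ m) = 0 := by
  induction m with
  | zero => simpa using v_one hK
  | succ m ih =>
    rw [pow_succ, hK.map_mul, ih, h, add_zero]

lemma v_pow_nonneg (hK : IsLocalField v) {x : K} (h : 0 ≤ v x) (m : ℕ) : 0 ≤ v (x ^ m) := by
  induction m with
  | zero => simp [v_one hK]
  | succ m ih =>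
    rw [pow_succ, hK.map_mul]
    calc (0 : WithTop ℤ) = 0 + 0 := by simp
      _ ≤ v (x ^ m) + v x := add_le_add ih h

lemma v_sum (hK : IsLocalField v) {ι : Type*} (s : Finset ι) (f : ι → K) (A : WithTop ℤ)
    (h : ∀ i ∈ s, A ≤ v (f i)) : A ≤ v (∑ i ∈ s, f i) := by
  induction s using Finset.cons_induction with
  | empty => simp [hK.map_zero]
  | cons a s ha ih =>
    rw [Finset.sum_cons]
    refine le_trans (le_min (h a (Finset.mem_cons_self a s)) (ih fun i hi => h i (Finset.mem_cons_of_mem hi))) ?_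
    exact hK.min_le_add _ _

lemma v_nat (hK : IsLocalField v) (m : ℕ) : 0 ≤ v (m : K) := by
  induction m with
  | zero => simp [hK.map_zero]
  | succ m ih =>
    push_cast
    refine le_trans (le_min ih (by simp [v_one hK])) (hK.min_le_add _ _)

lemma v_int (hK : IsLocalField v) (a : ℤ) : 0 ≤ v (a : K) := by
  rcases a.eq_nat_or_neg with ⟨m, rfl | rfl⟩
  · push_cast; exact v_nat hK m
  · push_cast; rw [v_neg hK]; exact v_nat hK m

lemma v_div_add (hK : IsLocalField v) {x y : K} (hy : y ≠ 0) : v (x / y) + v y = v x := by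
  rw [← hK.map_mul, div_mul_cancel₀ _ hy]

lemma v_div_ge (hK : IsLocalField v) {x y : K} (hy : y ≠ 0) {c A : ℤ}
    (hvy : v y = (c : WithTop ℤ)) (h : (A : WithTop ℤ) ≤ v x) :
    ((A - c : ℤ) : WithTop ℤ) ≤ v (x / y) := by
  have hd := v_div_add hK (x := x) hy
  rw [hvy] at hd
  cases hv : v (x / y) with
  | top => exact le_top
  | coe d =>
    rw [← hd, hv, ← WithTop.coe_add, WithTop.coe_le_coe] at h
    exact_mod_cast WithTop.coe_le_coe.mpr (by omega : A - c ≤ d)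


lemma v_eq_zero_of_close (hK : IsLocalField v) {x : K} (h : 0 < v (x - 1)) : v x = 0 := by
  have hx : x = 1 + (x - 1) := by ring
  rw [hx, v_add_eq_of_lt hK (by rw [v_one hK]; exact h), v_one hK]

lemma v_pow_sub_pow (hK : IsLocalField v) {x y : K} (hx : 0 ≤ v x) (hy : 0 ≤ v y) (m : ℕ) :
    v (x - y) ≤ v (x ^ m - y ^ m) := by
  induction m with
  | zero => simp [hK.map_zero]
  | succ m ih =>
    have hid : x ^ (m + 1) - y ^ (m + 1) = x * (x ^ m - y ^ m) + (x - y) * y ^ m := by ring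
    rw [hid]
    refine le_trans (le_min ?_ ?_) (hK.min_le_add _ _)
    · rw [hK.map_mul]
      calc v (x - y) = 0 + v (x - y) := by rw [zero_add]
        _ ≤ v x + v (x ^ m - y ^ m) := add_le_add hx ih
    · rw [hK.map_mul]
      calc v (x - y) = v (x - y) + 0 := by rw [add_zero]
        _ ≤ v (x - y) + v (y ^ m) := add_le_add le_rfl (v_pow_nonneg hK hy m)

lemma exists_lb {ι : Type*} (s : Finset ι) (f : ι → WithTop ℤ) :
    ∃ C : ℤ, ∀ i ∈ s, (C : WithTop ℤ) ≤ f i := by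
  induction s using Finset.cons_induction with
  | empty => exact ⟨0, by simp⟩
  | cons a s ha ih =>
    obtain ⟨C, hC⟩ := ih
    cases hfa : f a with
    | top =>
      exact ⟨C, by intro i hi; rcases Finset.mem_cons.mp hi with rfl | hi
                   · simp [hfa]
                   · exact hC i hi⟩
    | coe b =>
      refine ⟨min C b, ?_⟩
      intro i hi
      rcases Finset.mem_cons.mp hi with rfl | hi
      · rw [hfa]; exact_mod_cast WithTop.coe_le_coe.mpr (min_le_right _ _)
      · exact le_trans (WithTop.coe_le_coe.mpr (min_le_left _ _)) (hC i hi)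

lemma binom (hK : IsLocalField v) {n : ℕ} (hn : 1 ≤ n) (a t : K) (ha : 0 ≤ v a) (ht : 0 ≤ v t) :
    ∃ κ : K, (a + t) ^ n = a ^ n + n * a ^ (n - 1) * t + κ * t ^ 2 ∧ 0 ≤ v κ := by
  induction n, hn using Nat.le_induction with
  | base => exact ⟨0, by ring_nf, by simp [hK.map_zero]⟩
  | succ n hn ih =>
    obtain ⟨κ, hid, hκ⟩ := ih
    refine ⟨κ * (a + t) + n * a ^ (n - 1), ?_, ?_⟩
    · have hsub : n - 1 + 1 = n := Nat.sub_add_cancel hn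
      calc (a + t) ^ (n + 1) = (a + t) ^ n * (a + t) := by ring
        _ = (a ^ n + n * a ^ (n - 1) * t + κ * t ^ 2) * (a + t) := by rw [hid]
        _ = a ^ (n + 1) + n * (a ^ (n-1) * a) * t + a ^ n * t + (κ * (a + t) + n * a ^ (n - 1)) * t ^ 2 := by ring
        _ = a ^ (n + 1) + (n + 1 : ℕ) * a ^ ((n+1) - 1) * t + (κ * (a + t) + n * a ^ (n - 1)) * t ^ 2 := by
            rw [← pow_succ, hsub]
            push_cast
            ring
    · have h1 : 0 ≤ v (a + t) := le_trans (le_min ha ht) (hK.min_le_add a t)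
      have h2 : 0 ≤ v (κ * (a + t)) := by
        rw [hK.map_mul]
        calc (0:WithTop ℤ) = 0 + 0 := by simp
          _ ≤ _ := add_le_add hκ h1
      have h3 : 0 ≤ v ((n : K) * a ^ (n - 1)) := by
        rw [hK.map_mul]
        calc (0:WithTop ℤ) = 0 + 0 := by simp
          _ ≤ _ := add_le_add (v_nat hK n) (v_pow_nonneg hK ha _)
      exact le_trans (le_min h2 h3) (hK.min_le_add _ _)



lemma coe_pos_of_pos {c : ℤ} (h : 0 < c) : (0 : WithTop ℤ) < (c : WithTop ℤ) := by
  exact_mod_cast WithTop.coe_lt_coe.mpr h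

lemma coe_nonneg_of_nonneg {c : ℤ} (h : 0 ≤ c) : (0 : WithTop ℤ) ≤ (c : WithTop ℤ) := by
  exact_mod_cast WithTop.coe_le_coe.mpr h

lemma hensel (hK : IsLocalField v) {n : ℕ} (hn : 1 ≤ n) (hnK : (n : K) ≠ 0) {e : ℤ}
    (he : v (n : K) = (e : WithTop ℤ)) (w : K)
    (hw : ((2 * e + 1 : ℤ) : WithTop ℤ) ≤ v (w - 1)) : ∃ s : K, s ≠ 0 ∧ s ^ n = w := by
  have he0 : 0 ≤ e := by
    have := v_nat hK n; rw [he] at this; exact_mod_cast this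
  set a : ℕ → K := fun k =>
    Nat.rec (1 : K) (fun _ ak => ak + (w - ak ^ n) / ((n : K) * ak ^ (n - 1))) k with ha
  have hstep : ∀ k, a (k + 1) = a k + (w - (a k) ^ n) / ((n : K) * (a k) ^ (n - 1)) := fun k => rfl
  have ha0 : a 0 = 1 := rfl
  have hinv : ∀ k, ((e + 1 : ℤ) : WithTop ℤ) ≤ v (a k - 1) ∧
      ((2 * e + 1 + k : ℤ) : WithTop ℤ) ≤ v ((a k) ^ n - w) := by
    intro k
    induction k with
    | zero =>
      constructor
      · rw [ha0]; simp [hK.map_zero]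
      · rw [ha0, one_pow, show (1:K) - w = -(w - 1) by ring, v_neg hK]
        simpa using hw
    | succ k ih =>
      obtain ⟨h1, h2⟩ := ih
      have hva : v (a k) = 0 :=
        v_eq_zero_of_close hK (lt_of_lt_of_le (coe_pos_of_pos (by omega)) h1)
      have hane : a k ≠ 0 := fun h => by simp [h, hK.map_zero] at hva
      have hdenne : (n : K) * (a k) ^ (n - 1) ≠ 0 := mul_ne_zero hnK (pow_ne_zero _ hane)
      have hden : v ((n : K) * (a k) ^ (n - 1)) = (e : WithTop ℤ) := by
        rw [hK.map_mul, he, v_pow_zero hK hva, add_zero]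
      set δ := (w - (a k) ^ n) / ((n : K) * (a k) ^ (n - 1)) with hδ
      have hvδ : ((e + 1 + k : ℤ) : WithTop ℤ) ≤ v δ := by
        have hnum : ((2*e+1+k : ℤ) : WithTop ℤ) ≤ v (w - (a k) ^ n) := by
          rw [show w - (a k)^n = -((a k)^n - w) by ring, v_neg hK]; exact h2
        have hvδ' := v_div_ge hK hdenne hden hnum
        convert hvδ' using 2
        omega
      have hvδ0 : (0 : WithTop ℤ) ≤ v δ := le_trans (coe_nonneg_of_nonneg (by omega)) hvδ
      obtain ⟨κ, hid, hκ⟩ := binom hK hn (a k) δ (le_of_eq hva.symm) hvδ0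
      have hc : (n : K) * (a k) ^ (n - 1) * δ = w - (a k) ^ n := by
        rw [hδ]; field_simp
      have hkey : (a (k+1)) ^ n - w = κ * δ ^ 2 := by
        rw [hstep k, ← hδ, hid, hc]; ring
      constructor
      · rw [hstep k, ← hδ, show a k + δ - 1 = (a k - 1) + δ by ring]
        refine le_trans (le_min h1 ?_) (hK.min_le_add _ _)
        exact le_trans (WithTop.coe_le_coe.mpr (by omega)) hvδ
      · rw [hkey, hK.map_mul, sq, hK.map_mul]
        calc ((2*e+1+((k:ℕ)+1) : ℤ) : WithTop ℤ)
            ≤ ((0 : ℤ) : WithTop ℤ) + (((e+1+k : ℤ) : WithTop ℤ) + ((e+1+k : ℤ) : WithTop ℤ)) := by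
              rw [← WithTop.coe_add, ← WithTop.coe_add]
              exact WithTop.coe_le_coe.mpr (by push_cast; omega)
          _ ≤ v κ + (v δ + v δ) := add_le_add hκ (add_le_add hvδ hvδ)
  have hva : ∀ k, v (a k) = 0 := fun k =>
    v_eq_zero_of_close hK (lt_of_lt_of_le (coe_pos_of_pos (by omega)) (hinv k).1)
  have hδbound : ∀ k : ℕ, ((e + 1 + (k:ℤ) : ℤ) : WithTop ℤ) ≤ v (a (k+1) - a k) := by
    intro k
    have hane : a k ≠ 0 := by
      intro h
      have := hva k
      rw [h, hK.map_zero] at this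
      simp at this
    have hdenne : (n : K) * (a k) ^ (n - 1) ≠ 0 := mul_ne_zero hnK (pow_ne_zero _ hane)
    have hden : v ((n : K) * (a k) ^ (n - 1)) = (e : WithTop ℤ) := by
      rw [hK.map_mul, he, v_pow_zero hK (hva k), add_zero]
    have hnum : ((2*e+1+k : ℤ) : WithTop ℤ) ≤ v (w - (a k) ^ n) := by
      rw [show w - (a k)^n = -((a k)^n - w) by ring, v_neg hK]; exact (hinv k).2
    rw [hstep k, add_sub_cancel_left]
    have hvδ' := v_div_ge hK hdenne hden hnum
    convert hvδ' using 2
    omega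
  have hcauchy : ∀ m m' : ℕ, m ≤ m' → ((e + 1 + m : ℤ) : WithTop ℤ) ≤ v (a m' - a m) := by
    intro m m' hm
    induction m', hm using Nat.le_induction with
    | base => simp [hK.map_zero]
    | succ m' hm ih =>
      rw [show a (m' + 1) - a m = (a (m' + 1) - a m') + (a m' - a m) by ring]
      refine le_trans (le_min ?_ ih) (hK.min_le_add _ _)
      exact le_trans (WithTop.coe_le_coe.mpr (by omega)) (hδbound m')
  obtain ⟨L, hL⟩ := hK.complete a (by
    intro k
    refine ⟨(k - e - 1).toNat, ?_⟩
    intro m m' hm hm'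
    have hN := Int.self_le_toNat (k - e - 1)
    rcases le_total m m' with h | h
    · rw [v_sub_comm hK]
      refine le_trans (WithTop.coe_le_coe.mpr ?_) (hcauchy m m' h)
      have h2 : ((k-e-1).toNat : ℤ) ≤ (m : ℤ) := by exact_mod_cast hm
      omega
    · refine le_trans (WithTop.coe_le_coe.mpr ?_) (hcauchy m' m h)
      have h2 : ((k-e-1).toNat : ℤ) ≤ (m' : ℤ) := by exact_mod_cast hm'
      omega)
  have hvL : (0 : WithTop ℤ) ≤ v L := by
    obtain ⟨N, hN⟩ := hL 0
    have h1 := hN N le_rfl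
    rw [show L = a N - (a N - L) by ring]
    refine le_trans (le_min ?_ ?_) (v_min_le_sub hK _ _)
    · rw [hva N]
    · exact_mod_cast h1
  have hLn : L ^ n = w := by
    by_contra hne
    cases hv : v (L ^ n - w) with
    | top => exact hK.ne_top _ (sub_ne_zero.mpr hne) hv
    | coe c =>
      obtain ⟨N, hN⟩ := hL (c + 1)
      set m := max N (c + 1 - (2*e+1)).toNat with hm
      have h1 : ((c+1 : ℤ) : WithTop ℤ) ≤ v (a m - L) := hN m (le_max_left _ _)
      have hb1 : ((c+1:ℤ) : WithTop ℤ) ≤ v (L ^ n - (a m)^n) := by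
        refine le_trans ?_ (v_pow_sub_pow hK hvL (le_of_eq (hva m).symm) n)
        rw [v_sub_comm hK L (a m)]
        exact h1
      have hb2 : ((c+1:ℤ) : WithTop ℤ) ≤ v ((a m)^n - w) := by
        refine le_trans (WithTop.coe_le_coe.mpr ?_) (hinv m).2
        have h3 : ((c + 1 - (2*e+1)).toNat : ℤ) ≤ (m : ℤ) := by
          exact_mod_cast le_max_right N (c + 1 - (2*e+1)).toNat
        have h4 := Int.self_le_toNat (c + 1 - (2*e+1))
        omega
      have hfin : ((c+1:ℤ) : WithTop ℤ) ≤ v (L ^ n - w) := by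
        rw [show L ^ n - w = (L ^ n - (a m)^n) + ((a m)^n - w) by ring]
        exact le_trans (le_min hb1 hb2) (hK.min_le_add _ _)
      rw [hv] at hfin
      exact absurd (WithTop.coe_le_coe.mp hfin) (by omega)
  have hw0 : w ≠ 0 := by
    intro h
    have hz := v_eq_zero_of_close hK (lt_of_lt_of_le (coe_pos_of_pos (by omega)) hw)
    rw [h, hK.map_zero] at hz
    simp at hz
  exact ⟨L, fun h => hw0 (by rw [← hLn, h, zero_pow (by omega)]), hLn⟩

lemma eval_smul_homog {σ : Type*} [Fintype σ] {p : MvPolynomial σ K} {d : ℕ}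
    (hp : p.IsHomogeneous d) (c : K) (x : σ → K) :
    MvPolynomial.eval (fun i => c * x i) p = c ^ d * MvPolynomial.eval x p := by
  rw [MvPolynomial.eval_eq', MvPolynomial.eval_eq', Finset.mul_sum]
  apply Finset.sum_congr rfl
  intro u hu
  have hcoeff : MvPolynomial.coeff u p ≠ 0 := MvPolynomial.mem_support_iff.mp hu
  have hdeg : u.degree = d := by
    by_contra hne
    exact hcoeff (hp.coeff_eq_zero hne)
  have hsum : ∑ i, u i = d := by
    rw [← hdeg, Finsupp.degree]
    exact (Finset.sum_subset (Finset.subset_univ _)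
      (fun i _ hi => Finsupp.notMem_support_iff.mp hi)).symm
  calc MvPolynomial.coeff u p * ∏ i, (c * x i) ^ u i
      = MvPolynomial.coeff u p * ((∏ i, c ^ u i) * ∏ i, x i ^ u i) := by
        rw [← Finset.prod_mul_distrib]
        simp [mul_pow]
    _ = c ^ d * (MvPolynomial.coeff u p * ∏ i, x i ^ u i) := by
        rw [Finset.prod_pow_eq_pow_sum, hsum]; ring

lemma mv_eval_eq_pol (p : MvPolynomial (Fin 2) K) (t : K) :
    MvPolynomial.eval ![t, 1] p
      = Polynomial.eval t (MvPolynomial.aeval ![Polynomial.X, 1] p) := by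
  have h := MvPolynomial.comp_aeval_apply (R := K) (Polynomial.aeval t)
    (f := ![Polynomial.X, (1 : Polynomial K)]) (p := p)
  have h2 : (fun i => Polynomial.aeval t (![Polynomial.X, (1 : Polynomial K)] i)) = ![t, 1] := by
    funext i
    fin_cases i <;> simp
  rw [h2] at h
  exact h.symm

lemma eval_homog_eq (hK : IsLocalField v) {p : MvPolynomial (Fin 2) K} {d : ℕ}
    (hp : p.IsHomogeneous d) {x y : K} (hy : y ≠ 0) :
    MvPolynomial.eval ![x, y] p
      = y ^ d * Polynomial.eval (x / y) (MvPolynomial.aeval ![Polynomial.X, 1] p) := by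
  have h1 : ![x, y] = fun i => y * (![x / y, 1] i) := by
    funext i
    fin_cases i <;> simp
    field_simp
  rw [h1, eval_smul_homog hp, mv_eval_eq_pol]

lemma eval_homog_eq' (hK : IsLocalField v) {p : MvPolynomial (Fin 2) K} {d : ℕ}
    (hp : p.IsHomogeneous d) {x y : K} (hx : x ≠ 0) :
    MvPolynomial.eval ![x, y] p
      = x ^ d * Polynomial.eval (y / x) (MvPolynomial.aeval ![1, Polynomial.X] p) := by
  have h1 : ![x, y] = fun i => x * (![1, y / x] i) := by
    funext i
    fin_cases i <;> simp
    field_simp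
  rw [h1, eval_smul_homog hp]
  congr 1
  have h := MvPolynomial.comp_aeval_apply (R := K) (Polynomial.aeval (y / x))
    (f := ![(1 : Polynomial K), Polynomial.X]) (p := p)
  have h2 : (fun i => Polynomial.aeval (y / x) (![(1 : Polynomial K), Polynomial.X] i))
      = ![1, y / x] := by
    funext i
    fin_cases i <;> simp
  rw [h2] at h
  exact h.symm

lemma core (hK : IsLocalField v) {n : ℕ} (hn : 1 ≤ n) (hnK : (n : K) ≠ 0)
    (f : Polynomial K) (t₀ : K) :
    ∃ k : ℤ, ∀ t₁ t₂ : K,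
      (k : WithTop ℤ) ≤ v (t₁ - t₀) → (k : WithTop ℤ) ≤ v (t₂ - t₀) →
      f.eval t₁ ≠ 0 → f.eval t₂ ≠ 0 →
      (∃ γ : K, γ ≠ 0 ∧ t₁ - t₀ = γ ^ n * (t₂ - t₀)) →
      ∃ σ : K, σ ≠ 0 ∧ f.eval t₁ = σ ^ n * f.eval t₂ := by
  obtain ⟨e, he⟩ : ∃ e : ℤ, v ((n : K)) = (e : WithTop ℤ) := by
    cases hv : v ((n : K)) with
    | top => exact absurd hv (hK.ne_top _ hnK)
    | coe e => exact ⟨e, rfl⟩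
  by_cases hf : f = 0
  · exact ⟨0, fun t₁ t₂ _ _ h1 _ _ => absurd (by simp [hf]) h1⟩
  set m := f.rootMultiplicity t₀ with hm
  set h := f /ₘ (Polynomial.X - Polynomial.C t₀) ^ m with hh
  have hfac : (Polynomial.X - Polynomial.C t₀) ^ m * h = f :=
    f.pow_mul_divByMonic_rootMultiplicity_eq t₀
  have hh0 : h.eval t₀ ≠ 0 := Polynomial.eval_divByMonic_pow_rootMultiplicity_ne_zero t₀ hf
  set q := Polynomial.taylor t₀ h with hq
  have heval : ∀ t : K, Polynomial.eval (t - t₀) q = h.eval t := fun t => by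
    rw [hq, Polynomial.taylor_eval, sub_add_cancel]
  have hq0 : q.coeff 0 = h.eval t₀ := by
    rw [Polynomial.coeff_zero_eq_eval_zero, ← heval t₀, sub_self]
  obtain ⟨C, hC⟩ := exists_lb (Finset.range (q.natDegree + 1)) (fun i => v (q.coeff i))
  have hC' : ∀ i : ℕ, (C : WithTop ℤ) ≤ v (q.coeff i) := by
    intro i
    by_cases hi : i < q.natDegree + 1
    · exact hC i (Finset.mem_range.mpr hi)
    · rw [Polynomial.coeff_eq_zero_of_natDegree_lt (by omega), hK.map_zero]; exact le_top
  obtain ⟨c, hc⟩ : ∃ c : ℤ, v (h.eval t₀) = (c : WithTop ℤ) := by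
    cases hv : v (h.eval t₀) with
    | top => exact absurd hv (hK.ne_top _ hh0)
    | coe c => exact ⟨c, rfl⟩
  set kk : ℤ := max 0 (2 * e + 1 + c - C) with hkk
  refine ⟨kk, ?_⟩
  have hfeval : ∀ t : K, f.eval t = (t - t₀) ^ m * h.eval t := by
    intro t
    rw [← hfac]
    simp [Polynomial.eval_mul, Polynomial.eval_pow]
  have hkey : ∀ t : K, (kk : WithTop ℤ) ≤ v (t - t₀) → h.eval t ≠ 0 →
      ∃ α : K, α ≠ 0 ∧ h.eval t = α ^ n * h.eval t₀ := by
    intro t ht hht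
    have hu0 : (0 : WithTop ℤ) ≤ v (t - t₀) :=
      le_trans (coe_nonneg_of_nonneg (le_max_left _ _)) ht
    have hdecomp : h.eval t - h.eval t₀
        = ∑ i ∈ Finset.range q.natDegree, q.coeff (i + 1) * (t - t₀) ^ (i + 1) := by
      have e1 : Polynomial.eval (t - t₀) q
          = (∑ i ∈ Finset.range q.natDegree, q.coeff (i + 1) * (t - t₀) ^ (i + 1))
            + q.coeff 0 * (t - t₀) ^ 0 := by
        rw [Polynomial.eval_eq_sum_range, Finset.sum_range_succ']
      rw [← heval t, ← hq0, e1]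
      ring
    have hsum : ((C + kk : ℤ) : WithTop ℤ) ≤ v (h.eval t - h.eval t₀) := by
      rw [hdecomp]
      apply v_sum hK
      intro i _
      rw [hK.map_mul, pow_succ, hK.map_mul]
      have h1 := hC' (i + 1)
      have h2 := v_pow_nonneg hK hu0 i
      have h3 : ((C + kk : ℤ) : WithTop ℤ)
          = (C : WithTop ℤ) + ((0 : WithTop ℤ) + (kk : WithTop ℤ)) := by
        push_cast
        rw [zero_add]
      rw [h3]
      exact add_le_add h1 (add_le_add h2 ht)
    have hW : ((2 * e + 1 : ℤ) : WithTop ℤ) ≤ v (h.eval t / h.eval t₀ - 1) := by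
      have e2 : h.eval t / h.eval t₀ - 1 = (h.eval t - h.eval t₀) / h.eval t₀ := by
        field_simp
      rw [e2]
      refine le_trans (WithTop.coe_le_coe.mpr ?_) (v_div_ge hK hh0 hc hsum)
      have := le_max_right 0 (2 * e + 1 + c - C)
      omega
    obtain ⟨α, hα, hαn⟩ := hensel hK hn hnK he _ hW
    refine ⟨α, hα, ?_⟩
    rw [hαn]
    field_simp
  intro t₁ t₂ ht₁ ht₂ hf1 hf2 hrel
  obtain ⟨γ, hγ, hγrel⟩ := hrel
  obtain ⟨α, hα, hαe⟩ := hkey t₁ ht₁ (fun h0 => hf1 (by rw [hfeval t₁, h0, mul_zero]))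
  obtain ⟨β, hβ, hβe⟩ := hkey t₂ ht₂ (fun h0 => hf2 (by rw [hfeval t₂, h0, mul_zero]))
  refine ⟨γ ^ m * α * β⁻¹, mul_ne_zero (mul_ne_zero (pow_ne_zero _ hγ) hα) (inv_ne_zero hβ), ?_⟩
  rw [hfeval t₁, hfeval t₂, hγrel, hαe, hβe, mul_pow, ← pow_mul]
  field_simp
  rw [div_pow, mul_assoc ((t₂ - t₀) ^ m), div_mul_cancel₀ _ (pow_ne_zero _ hβ)]
  ring

lemma v_flip (hK : IsLocalField v) {x y : K} (hy : y ≠ 0) {k : ℤ}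
    (h : v (x / y) ≤ (k : WithTop ℤ)) : x ≠ 0 ∧ ((-k : ℤ) : WithTop ℤ) ≤ v (y / x) := by
  have hx : x ≠ 0 := by
    intro h0
    rw [h0, zero_div, hK.map_zero] at h
    simp at h
  refine ⟨hx, ?_⟩
  have hmul : (x / y) * (y / x) = 1 := by field_simp
  have h1 : v (x / y) + v (y / x) = 0 := by
    rw [← hK.map_mul, hmul, v_one hK]
  cases hxy : v (x / y) with
  | top => rw [hxy] at h; simp at h
  | coe a =>
    cases hyx : v (y / x) with
    | top => exact le_top
    | coe b =>
      rw [hxy, hyx, ← WithTop.coe_add] at h1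
      rw [hxy] at h
      have hab : a + b = 0 := WithTop.coe_inj.mp h1
      have hak : a ≤ k := WithTop.coe_le_coe.mp h
      exact WithTop.coe_le_coe.mpr (by omega)

end Stmt8Aux

/-- Let `K` be a local field and `n` a positive integer with `char K ∤ n`.
Let `g(x,y) = ∏_{j=1}^r g_j(P_j(x,y), Q_j(x,y))`, where each `g_j` is a function
`K^*/(K^*)^n × K^*/(K^*)^n → ℂ` and `P_j, Q_j ∈ K[x,y]` are nonzero homogeneous
polynomials.  Let `R = {(x,y) ∈ K × K : min(v x, v y) = 0}`.  Then for every
`t₀ ∈ ℙ¹(K)` there is a punctured neighbourhood `U_{t₀}` of `t₀` such that, for all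
`(x,y) ∈ R` with `x/y ∈ U_{t₀}` at which `g` is defined, the value of `g(x,y)` depends
only on the classes of `x − t₀·y` and of `y` in `K^*/(K^*)^n` (only on the classes of
`x` and of `y` if `t₀ = ∞`). -/
theorem stmt8 {K : Type*} [Field K] (v : K → WithTop ℤ) (hK : IsLocalField v)
    (n : ℕ) (hn : 0 < n) (hchar : ringChar K = 0 ∨ ¬ (ringChar K ∣ n))
    (r : ℕ) (g : Fin r → K → K → ℂ)
    (hg : ∀ (j : Fin r) (a b s t : K), s ≠ 0 → t ≠ 0 →
      g j (s ^ n * a) (t ^ n * b) = g j a b)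
    (P Q : Fin r → MvPolynomial (Fin 2) K)
    (hP : ∀ j, P j ≠ 0) (hQ : ∀ j, Q j ≠ 0)
    (hPhom : ∀ j, ∃ d : ℕ, (P j).IsHomogeneous d)
    (hQhom : ∀ j, ∃ d : ℕ, (Q j).IsHomogeneous d) :
    (∀ t₀ : K, ∃ k : ℤ, ∀ x₁ y₁ x₂ y₂ : K,
        min (v x₁) (v y₁) = 0 → min (v x₂) (v y₂) = 0 →
        y₁ ≠ 0 → y₂ ≠ 0 → x₁ / y₁ ≠ t₀ → x₂ / y₂ ≠ t₀ →
        (k : WithTop ℤ) ≤ v (x₁ / y₁ - t₀) → (k : WithTop ℤ) ≤ v (x₂ / y₂ - t₀) →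
        (∀ j, MvPolynomial.eval ![x₁, y₁] (P j) ≠ 0 ∧
          MvPolynomial.eval ![x₁, y₁] (Q j) ≠ 0) →
        (∀ j, MvPolynomial.eval ![x₂, y₂] (P j) ≠ 0 ∧
          MvPolynomial.eval ![x₂, y₂] (Q j) ≠ 0) →
        (∃ s : K, s ≠ 0 ∧ x₁ - t₀ * y₁ = s ^ n * (x₂ - t₀ * y₂)) →
        (∃ s : K, s ≠ 0 ∧ y₁ = s ^ n * y₂) →
        (∏ j, g j (MvPolynomial.eval ![x₁, y₁] (P j))
            (MvPolynomial.eval ![x₁, y₁] (Q j))) =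
          ∏ j, g j (MvPolynomial.eval ![x₂, y₂] (P j))
            (MvPolynomial.eval ![x₂, y₂] (Q j)))
    ∧ (∃ k : ℤ, ∀ x₁ y₁ x₂ y₂ : K,
        min (v x₁) (v y₁) = 0 → min (v x₂) (v y₂) = 0 →
        y₁ ≠ 0 → y₂ ≠ 0 →
        v (x₁ / y₁) ≤ (k : WithTop ℤ) → v (x₂ / y₂) ≤ (k : WithTop ℤ) →
        (∀ j, MvPolynomial.eval ![x₁, y₁] (P j) ≠ 0 ∧
          MvPolynomial.eval ![x₁, y₁] (Q j) ≠ 0) →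
        (∀ j, MvPolynomial.eval ![x₂, y₂] (P j) ≠ 0 ∧
          MvPolynomial.eval ![x₂, y₂] (Q j) ≠ 0) →
        (∃ s : K, s ≠ 0 ∧ x₁ = s ^ n * x₂) →
        (∃ s : K, s ≠ 0 ∧ y₁ = s ^ n * y₂) →
        (∏ j, g j (MvPolynomial.eval ![x₁, y₁] (P j))
            (MvPolynomial.eval ![x₁, y₁] (Q j))) =
          ∏ j, g j (MvPolynomial.eval ![x₂, y₂] (P j))
            (MvPolynomial.eval ![x₂, y₂] (Q j))) := by
  classical
  have hn1 : 1 ≤ n := hn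
  have hnK : (n : K) ≠ 0 := by
    intro h0
    rw [CharP.cast_eq_zero_iff K (ringChar K) n] at h0
    rcases hchar with h | h
    · rw [h] at h0
      exact absurd (zero_dvd_iff.mp h0) (by omega)
    · exact h h0
  constructor
  · -- finite t₀
    intro t₀
    choose dP hdP using hPhom
    choose dQ hdQ using hQhom
    choose kP hkP using fun j =>
      Stmt8Aux.core hK hn1 hnK (MvPolynomial.aeval ![Polynomial.X, 1] (P j)) t₀
    choose kQ hkQ using fun j =>
      Stmt8Aux.core hK hn1 hnK (MvPolynomial.aeval ![Polynomial.X, 1] (Q j)) t₀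
    refine ⟨∑ j : Fin r, (|kP j| + |kQ j|), ?_⟩
    intro x₁ y₁ x₂ y₂ _ _ hy₁ hy₂ _ _ hv₁ hv₂ hnz₁ hnz₂ hsx hsy
    obtain ⟨s, hs, hsx'⟩ := hsx
    obtain ⟨u, hu, hsy'⟩ := hsy
    have hγ : s / u ≠ 0 := div_ne_zero hs hu
    have htrel : x₁ / y₁ - t₀ = (s / u) ^ n * (x₂ / y₂ - t₀) := by
      have e1 : x₁ / y₁ - t₀ = (x₁ - t₀ * y₁) / y₁ := by field_simp
      have e2 : x₂ / y₂ - t₀ = (x₂ - t₀ * y₂) / y₂ := by field_simp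
      rw [e1, e2, hsx', hsy', div_pow]
      field_simp
      try ring
    have hBP : ∀ j : Fin r, (kP j : WithTop ℤ) ≤ ((∑ j : Fin r, (|kP j| + |kQ j|) : ℤ) : WithTop ℤ) := by
      intro j
      apply WithTop.coe_le_coe.mpr
      calc kP j ≤ |kP j| := le_abs_self _
        _ ≤ |kP j| + |kQ j| := le_add_of_nonneg_right (abs_nonneg _)
        _ ≤ _ := Finset.single_le_sum (f := fun j => |kP j| + |kQ j|)
              (fun i _ => by positivity) (Finset.mem_univ j)
    have hBQ : ∀ j : Fin r, (kQ j : WithTop ℤ) ≤ ((∑ j : Fin r, (|kP j| + |kQ j|) : ℤ) : WithTop ℤ) := by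
      intro j
      apply WithTop.coe_le_coe.mpr
      calc kQ j ≤ |kQ j| := le_abs_self _
        _ ≤ |kP j| + |kQ j| := le_add_of_nonneg_left (abs_nonneg _)
        _ ≤ _ := Finset.single_le_sum (f := fun j => |kP j| + |kQ j|)
              (fun i _ => by positivity) (Finset.mem_univ j)
    apply Finset.prod_congr rfl
    intro j _
    obtain ⟨hP1, hQ1⟩ := hnz₁ j
    obtain ⟨hP2, hQ2⟩ := hnz₂ j
    have hEP1 := Stmt8Aux.eval_homog_eq hK (hdP j) (x := x₁) hy₁
    have hEP2 := Stmt8Aux.eval_homog_eq hK (hdP j) (x := x₂) hy₂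
    have hEQ1 := Stmt8Aux.eval_homog_eq hK (hdQ j) (x := x₁) hy₁
    have hEQ2 := Stmt8Aux.eval_homog_eq hK (hdQ j) (x := x₂) hy₂
    have hfP1 : Polynomial.eval (x₁ / y₁) (MvPolynomial.aeval ![Polynomial.X, 1] (P j)) ≠ 0 :=
      fun h0 => hP1 (by rw [hEP1, h0, mul_zero])
    have hfP2 : Polynomial.eval (x₂ / y₂) (MvPolynomial.aeval ![Polynomial.X, 1] (P j)) ≠ 0 :=
      fun h0 => hP2 (by rw [hEP2, h0, mul_zero])
    have hfQ1 : Polynomial.eval (x₁ / y₁) (MvPolynomial.aeval ![Polynomial.X, 1] (Q j)) ≠ 0 :=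
      fun h0 => hQ1 (by rw [hEQ1, h0, mul_zero])
    have hfQ2 : Polynomial.eval (x₂ / y₂) (MvPolynomial.aeval ![Polynomial.X, 1] (Q j)) ≠ 0 :=
      fun h0 => hQ2 (by rw [hEQ2, h0, mul_zero])
    obtain ⟨σ, hσ, hσe⟩ := hkP j (x₁ / y₁) (x₂ / y₂) (le_trans (hBP j) hv₁)
      (le_trans (hBP j) hv₂) hfP1 hfP2 ⟨s / u, hγ, htrel⟩
    obtain ⟨τ, hτ, hτe⟩ := hkQ j (x₁ / y₁) (x₂ / y₂) (le_trans (hBQ j) hv₁)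
      (le_trans (hBQ j) hv₂) hfQ1 hfQ2 ⟨s / u, hγ, htrel⟩
    have hfullP : MvPolynomial.eval ![x₁, y₁] (P j)
        = (u ^ dP j * σ) ^ n * MvPolynomial.eval ![x₂, y₂] (P j) := by
      rw [hEP1, hEP2, hσe, hsy']
      ring
    have hfullQ : MvPolynomial.eval ![x₁, y₁] (Q j)
        = (u ^ dQ j * τ) ^ n * MvPolynomial.eval ![x₂, y₂] (Q j) := by
      rw [hEQ1, hEQ2, hτe, hsy']
      ring
    rw [hfullP, hfullQ]
    exact hg j _ _ _ _ (mul_ne_zero (pow_ne_zero _ hu) hσ) (mul_ne_zero (pow_ne_zero _ hu) hτ)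
  · -- t₀ = ∞
    choose dP hdP using hPhom
    choose dQ hdQ using hQhom
    choose kP hkP using fun j =>
      Stmt8Aux.core hK hn1 hnK (MvPolynomial.aeval ![1, Polynomial.X] (P j)) (0 : K)
    choose kQ hkQ using fun j =>
      Stmt8Aux.core hK hn1 hnK (MvPolynomial.aeval ![1, Polynomial.X] (Q j)) (0 : K)
    refine ⟨-(∑ j : Fin r, (|kP j| + |kQ j|)), ?_⟩
    intro x₁ y₁ x₂ y₂ _ _ hy₁ hy₂ hv₁ hv₂ hnz₁ hnz₂ hsx hsy
    obtain ⟨s, hs, hsx'⟩ := hsx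
    obtain ⟨u, hu, hsy'⟩ := hsy
    obtain ⟨hx₁, hw₁⟩ := Stmt8Aux.v_flip hK hy₁ hv₁
    obtain ⟨hx₂, hw₂⟩ := Stmt8Aux.v_flip hK hy₂ hv₂
    rw [neg_neg] at hw₁ hw₂
    have hγ : u / s ≠ 0 := div_ne_zero hu hs
    have htrel : y₁ / x₁ - 0 = (u / s) ^ n * (y₂ / x₂ - 0) := by
      rw [sub_zero, sub_zero, hsx', hsy', div_pow]
      field_simp
      try ring
    have hBP : ∀ j : Fin r, (kP j : WithTop ℤ) ≤ ((∑ j : Fin r, (|kP j| + |kQ j|) : ℤ) : WithTop ℤ) := by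
      intro j
      apply WithTop.coe_le_coe.mpr
      calc kP j ≤ |kP j| := le_abs_self _
        _ ≤ |kP j| + |kQ j| := le_add_of_nonneg_right (abs_nonneg _)
        _ ≤ _ := Finset.single_le_sum (f := fun j => |kP j| + |kQ j|)
              (fun i _ => by positivity) (Finset.mem_univ j)
    have hBQ : ∀ j : Fin r, (kQ j : WithTop ℤ) ≤ ((∑ j : Fin r, (|kP j| + |kQ j|) : ℤ) : WithTop ℤ) := by
      intro j
      apply WithTop.coe_le_coe.mpr
      calc kQ j ≤ |kQ j| := le_abs_self _
        _ ≤ |kP j| + |kQ j| := le_add_of_nonneg_left (abs_nonneg _)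
        _ ≤ _ := Finset.single_le_sum (f := fun j => |kP j| + |kQ j|)
              (fun i _ => by positivity) (Finset.mem_univ j)
    have hw₁P : ∀ j : Fin r, (kP j : WithTop ℤ) ≤ v (y₁ / x₁ - 0) := by
      intro j; rw [sub_zero]; exact le_trans (hBP j) hw₁
    have hw₂P : ∀ j : Fin r, (kP j : WithTop ℤ) ≤ v (y₂ / x₂ - 0) := by
      intro j; rw [sub_zero]; exact le_trans (hBP j) hw₂
    have hw₁Q : ∀ j : Fin r, (kQ j : WithTop ℤ) ≤ v (y₁ / x₁ - 0) := by
      intro j; rw [sub_zero]; exact le_trans (hBQ j) hw₁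
    have hw₂Q : ∀ j : Fin r, (kQ j : WithTop ℤ) ≤ v (y₂ / x₂ - 0) := by
      intro j; rw [sub_zero]; exact le_trans (hBQ j) hw₂
    apply Finset.prod_congr rfl
    intro j _
    obtain ⟨hP1, hQ1⟩ := hnz₁ j
    obtain ⟨hP2, hQ2⟩ := hnz₂ j
    have hEP1 := Stmt8Aux.eval_homog_eq' hK (hdP j) (y := y₁) hx₁
    have hEP2 := Stmt8Aux.eval_homog_eq' hK (hdP j) (y := y₂) hx₂
    have hEQ1 := Stmt8Aux.eval_homog_eq' hK (hdQ j) (y := y₁) hx₁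
    have hEQ2 := Stmt8Aux.eval_homog_eq' hK (hdQ j) (y := y₂) hx₂
    have hfP1 : Polynomial.eval (y₁ / x₁) (MvPolynomial.aeval ![1, Polynomial.X] (P j)) ≠ 0 :=
      fun h0 => hP1 (by rw [hEP1, h0, mul_zero])
    have hfP2 : Polynomial.eval (y₂ / x₂) (MvPolynomial.aeval ![1, Polynomial.X] (P j)) ≠ 0 :=
      fun h0 => hP2 (by rw [hEP2, h0, mul_zero])
    have hfQ1 : Polynomial.eval (y₁ / x₁) (MvPolynomial.aeval ![1, Polynomial.X] (Q j)) ≠ 0 :=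
      fun h0 => hQ1 (by rw [hEQ1, h0, mul_zero])
    have hfQ2 : Polynomial.eval (y₂ / x₂) (MvPolynomial.aeval ![1, Polynomial.X] (Q j)) ≠ 0 :=
      fun h0 => hQ2 (by rw [hEQ2, h0, mul_zero])
    obtain ⟨σ, hσ, hσe⟩ := hkP j (y₁ / x₁) (y₂ / x₂) (hw₁P j) (hw₂P j) hfP1 hfP2
      ⟨u / s, hγ, htrel⟩
    obtain ⟨τ, hτ, hτe⟩ := hkQ j (y₁ / x₁) (y₂ / x₂) (hw₁Q j) (hw₂Q j) hfQ1 hfQ2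
      ⟨u / s, hγ, htrel⟩
    have hfullP : MvPolynomial.eval ![x₁, y₁] (P j)
        = (s ^ dP j * σ) ^ n * MvPolynomial.eval ![x₂, y₂] (P j) := by
      rw [hEP1, hEP2, hσe, hsx']
      ring
    have hfullQ : MvPolynomial.eval ![x₁, y₁] (Q j)
        = (s ^ dQ j * τ) ^ n * MvPolynomial.eval ![x₂, y₂] (Q j) := by
      rw [hEQ1, hEQ2, hτe, hsx']
      ring
    rw [hfullP, hfullQ]
    exact hg j _ _ _ _ (mul_ne_zero (pow_ne_zero _ hs) hσ) (mul_ne_zero (pow_ne_zero _ hs) hτ)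
end
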